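/- arXiv:1503.08057 — 4 statements merged into one kernel-verified Lean document; each statement's English description precedes it below -/
import Mathlib

section
/- Let G be a graph containing no triangle and no induced cycle of even length at least 6, let v be a vertex of G and (N_0, N_1, …) be the v-levelling. Let P = (G_1, P_1, …, G_ℓ, P_ℓ, H) be a rooted PCP of order ℓ in a level N_k for some k ≥ 1. If a vertex x' ∈ N_{k−1} has a neighbor in H, then x' has a neighbor in every regular block G_i for 1 ≤ i ≤ ℓ. -/
open SimpleGraph

/-- The chromatic number of `G`, as a natural number. -/
noncomputable def chi {V : Type} (G : SimpleGraph V) : ℕ := G.chromaticNumber.toNat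

/-- The chromatic number of the subgraph of `G` induced by the vertex set `A`. -/
noncomputable def chiSet {V : Type} (G : SimpleGraph V) (A : Set V) : ℕ :=
  (G.induce A).chromaticNumber.toNat

/-- `G` contains no induced cycle of length `n`: there is no graph embedding
(induced-subgraph embedding) of the `n`-cycle into `G`. -/
def NoInducedCycle {V : Type} (G : SimpleGraph V) (n : ℕ) : Prop :=
  IsEmpty (cycleGraph n ↪g G)

/-- The `k`-th level of the `v`-levelling: vertices at distance exactly `k` from `v`. -/
def level {V : Type} (G : SimpleGraph V) (v : V) (k : ℕ) : Set V :=
  {x | G.Reachable v x ∧ G.dist v x = k}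

/-- `N(S)`: the set of vertices adjacent to at least one vertex of `S`. -/
def neighborsOf {V : Type} (G : SimpleGraph V) (S : Set V) : Set V :=
  {x | ∃ s ∈ S, G.Adj s x}

/-- A walk is an induced path: it is a path, and its vertex set induces
no edges other than the path edges. -/
def IsInducedPathW {V : Type} {G : SimpleGraph V} {u w : V} (p : G.Walk u w) : Prop :=
  p.IsPath ∧ ∀ a ∈ p.support, ∀ b ∈ p.support, G.Adj a b → s(a, b) ∈ p.edges

/-- A Parity Changing Path (PCP) of order `ℓ` in `G`: regular blocks `block 0, …, block (ℓ-1)`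
(vertex sets of induced subgraphs), a last block `lastBlock`, induced paths `path i` of
length at least `2` from `y i ∈ block i` to `x i.succ`, with the prescribed shared vertices,
disjointness and edge conditions, an induced odd and an induced even `x i`–`y i` path inside
each regular block, `lastBlock` connected and each regular block `4`-colorable. -/
structure PCP {V : Type} (G : SimpleGraph V) (ℓ : ℕ) where
  block : Fin ℓ → Set V
  lastBlock : Set V
  x : Fin (ℓ + 1) → V
  y : Fin ℓ → V
  path : (i : Fin ℓ) → G.Walk (y i) (x i.succ)
  x_mem : ∀ i : Fin ℓ, x i.castSucc ∈ block i
  y_mem : ∀ i : Fin ℓ, y i ∈ block i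
  xlast_mem : x (Fin.last ℓ) ∈ lastBlock
  path_induced : ∀ i, IsInducedPathW (path i)
  path_length : ∀ i, 2 ≤ (path i).length
  blocks_disjoint : ∀ i j, i ≠ j → Disjoint (block i) (block j)
  block_last_disjoint : ∀ i, Disjoint (block i) lastBlock
  block_path_inter : ∀ i j : Fin ℓ, ∀ w ∈ block i, w ∈ (path j).support →
      (j = i ∧ w = y i) ∨ ((j : ℕ) + 1 = (i : ℕ) ∧ w = x i.castSucc)
  last_path_inter : ∀ j : Fin ℓ, ∀ w ∈ lastBlock, w ∈ (path j).support →
      (j : ℕ) + 1 = ℓ ∧ w = x (Fin.last ℓ)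
  paths_disjoint : ∀ i j : Fin ℓ, i ≠ j → ∀ w,
      w ∈ (path i).support → w ∈ (path j).support → False
  edges_within : ∀ a b : V,
      a ∈ (⋃ i, block i) ∪ lastBlock ∪ (⋃ i, {w | w ∈ (path i).support}) →
      b ∈ (⋃ i, block i) ∪ lastBlock ∪ (⋃ i, {w | w ∈ (path i).support}) →
      G.Adj a b →
      (∃ i, a ∈ block i ∧ b ∈ block i) ∨ (a ∈ lastBlock ∧ b ∈ lastBlock) ∨
        (∃ i, a ∈ (path i).support ∧ b ∈ (path i).support)
  odd_path : ∀ i : Fin ℓ, ∃ p : G.Walk (x i.castSucc) (y i),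
      IsInducedPathW p ∧ (∀ w ∈ p.support, w ∈ block i) ∧ Odd p.length
  even_path : ∀ i : Fin ℓ, ∃ p : G.Walk (x i.castSucc) (y i),
      IsInducedPathW p ∧ (∀ w ∈ p.support, w ∈ block i) ∧ Even p.length
  last_connected : (G.induce lastBlock).Connected
  block_chrom : ∀ i, (G.induce (block i)).chromaticNumber ≤ 4

/-- The origin of a PCP. -/
def PCP.origin {V : Type} {G : SimpleGraph V} {ℓ : ℕ} (P : PCP G ℓ) : V := P.x 0

/-- The vertex set of a PCP. -/
def PCP.support {V : Type} {G : SimpleGraph V} {ℓ : ℕ} (P : PCP G ℓ) : Set V :=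
  (⋃ i, P.block i) ∪ P.lastBlock ∪ (⋃ i, {w | w ∈ (P.path i).support})

/-- The leftovers of a PCP: the chromatic number of its last block. -/
noncomputable def PCP.leftovers {V : Type} {G : SimpleGraph V} {ℓ : ℕ} (P : PCP G ℓ) : ℕ :=
  chiSet G P.lastBlock

/-- A strong PCP: every regular block contains an induced 5-cycle. -/
def PCP.IsStrong {V : Type} {G : SimpleGraph V} {ℓ : ℕ} (P : PCP G ℓ) : Prop :=
  ∀ i : Fin ℓ, ∃ f : cycleGraph 5 ↪g G, ∀ t, f t ∈ P.block i

/-- A PCP lies in the level `N_k` of the `v`-levelling and is rooted there: some vertex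
`u' ∈ N_{k-1}` is adjacent to the origin and to no other vertex of the PCP. -/
def PCP.IsRootedInLevel {V : Type} {G : SimpleGraph V} {ℓ : ℕ} (P : PCP G ℓ)
    (v : V) (k : ℕ) : Prop :=
  P.support ⊆ level G v k ∧
    ∃ u' ∈ level G v (k - 1), G.Adj u' P.origin ∧
      ∀ w ∈ P.support, w ≠ P.origin → ¬ G.Adj u' w
namespace SimpleGraph
namespace Walk

variable {V : Type} {G : SimpleGraph V}

lemma support_getElem_eq_getVert' {u v : V} (p : G.Walk u v) {i : ℕ}
    (h : i < p.support.length) : p.support[i] = p.getVert i := by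
  induction p generalizing i with
  | nil =>
    have : i = 0 := by simpa using h
    subst this; simp
  | cons hadj q ih =>
    cases i with
    | zero => simp
    | succ n =>
      simp only [support_cons, List.getElem_cons_succ, getVert_cons_succ]
      exact ih (by simpa using h)

lemma IsPath.getVert_inj {u v : V} {p : G.Walk u v} (hp : p.IsPath) {i j : ℕ}
    (hi : i ≤ p.length) (hj : j ≤ p.length) (h : p.getVert i = p.getVert j) : i = j := by
  have hi' : i < p.support.length := by rw [length_support]; omega
  have hj' : j < p.support.length := by rw [length_support]; omega
  rw [← support_getElem_eq_getVert' p hi', ← support_getElem_eq_getVert' p hj'] at h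
  exact ((List.Nodup.getElem_inj_iff (p.isPath_def.mp hp)).mp h)

lemma mem_edges_iff_exists_getVert {u v a b : V} {p : G.Walk u v} :
    s(a, b) ∈ p.edges ↔ ∃ m, m < p.length ∧
      ((p.getVert m = a ∧ p.getVert (m+1) = b) ∨ (p.getVert m = b ∧ p.getVert (m+1) = a)) := by
  induction p with
  | nil => simp
  | @cons u' w' v' hadj q ih =>
    simp only [edges_cons, List.mem_cons, length_cons]
    constructor
    · rintro (heq | hmem)
      · refine ⟨0, by omega, ?_⟩
        rw [Sym2.eq_iff] at heq
        simp only [getVert_zero, getVert_cons_succ]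
        rcases heq with ⟨rfl, rfl⟩ | ⟨rfl, rfl⟩
        · exact Or.inl ⟨rfl, by simp⟩
        · exact Or.inr ⟨rfl, by simp⟩
      · obtain ⟨m, hm, hc⟩ := ih.mp hmem
        exact ⟨m + 1, by omega, by simpa using hc⟩
    · rintro ⟨m, hm, hc⟩
      cases m with
      | zero =>
        simp only [getVert_zero, getVert_cons_succ, getVert_zero] at hc
        left
        rw [Sym2.eq_iff]
        rcases hc with ⟨rfl, h1⟩ | ⟨rfl, h1⟩
        · left; exact ⟨rfl, by simpa using h1.symm⟩
        · right; exact ⟨(by simpa using h1.symm), rfl⟩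
      | succ m' =>
        right
        exact ih.mpr ⟨m', by omega, by simpa using hc⟩

lemma edge_getVert_succ_mem {u v : V} (p : G.Walk u v) {m : ℕ} (hm : m < p.length) :
    s(p.getVert m, p.getVert (m+1)) ∈ p.edges :=
  mem_edges_iff_exists_getVert.mpr ⟨m, hm, Or.inl ⟨rfl, rfl⟩⟩

lemma IsCycle.getVert_inj {u : V} {p : G.Walk u u} (hp : p.IsCycle) {i j : ℕ}
    (hi : i < p.length) (hj : j < p.length) (h : p.getVert i = p.getVert j) : i = j := by
  have hnd : p.support.tail.Nodup := hp.support_nodup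
  have h3 := hp.three_le_length
  have hlen : p.support.tail.length = p.length := by
    have := p.length_support
    simp only [List.length_tail, this]
    omega
  have key : ∀ m : ℕ, (hm : m - 1 < p.support.tail.length) → 0 < m →
      p.support.tail[m-1] = p.getVert m := by
    intro m hm hm0
    have h1 : p.support.tail[m-1] = p.support[m]'(by rw [length_support]; omega) := by
      rw [List.getElem_tail]
      congr 1
      omega
    rw [h1, support_getElem_eq_getVert']
  have gv : ∀ m : ℕ, m < p.length → 0 < m → p.getVert m = u → m = p.length := by
    intro m hm hm0 hval
    have e1 : p.support.tail[m-1]'(by omega) = p.support.tail[p.length-1]'(by omega) := by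
      rw [key m (by omega) hm0, key p.length (by omega) (by omega), hval, getVert_length]
    have := (List.Nodup.getElem_inj_iff hnd).mp e1
    omega
  rcases Nat.eq_zero_or_pos i with rfl | hi0
  · rcases Nat.eq_zero_or_pos j with rfl | hj0
    · rfl
    · rw [getVert_zero] at h
      have := gv j hj hj0 h.symm
      omega
  · rcases Nat.eq_zero_or_pos j with rfl | hj0
    · rw [getVert_zero] at h
      have := gv i hi hi0 h
      omega
    · have e1 : p.support.tail[i-1]'(by omega) = p.support.tail[j-1]'(by omega) := by
        rw [key i (by omega) hi0, key j (by omega) hj0, h]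
      have := (List.Nodup.getElem_inj_iff hnd).mp e1
      omega

end Walk
end SimpleGraph

section Infra2
open SimpleGraph Walk

variable {V : Type} {G : SimpleGraph V}

lemma mem_support_append {a b c : V} {p : G.Walk a b} {q : G.Walk b c} {s : V} :
    s ∈ (p.append q).support ↔ s ∈ p.support ∨ s ∈ q.support :=
  Walk.mem_support_append_iff p q

lemma IsPath.eq_junction {a b c : V} {p : G.Walk a b} {q : G.Walk b c}
    (h : (p.append q).IsPath) {s : V} (hs : s ∈ p.support) (hs' : s ∈ q.support) : s = b := by
  rw [Walk.isPath_def, Walk.support_append, List.nodup_append] at h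
  by_contra hne
  have hs'' : s ∈ q.support.tail := by
    have hq := q.support_eq_cons
    rw [hq, List.mem_cons] at hs'
    rcases hs' with rfl | h'
    · exact absurd rfl hne
    · exact h'
  exact h.2.2 s hs s hs'' rfl

lemma IsInducedPathW.append {a b c : V} {p : G.Walk a b} {q : G.Walk b c}
    (hp : IsInducedPathW p) (hq : IsInducedPathW q)
    (hdisj : ∀ s ∈ p.support, s ∈ q.support → s = b)
    (hadj : ∀ s ∈ p.support, ∀ t ∈ q.support, s ≠ b → t ≠ b → ¬ G.Adj s t) :
    IsInducedPathW (p.append q) := by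
  have hpath : (p.append q).IsPath := by
    rw [Walk.isPath_def, Walk.support_append, List.nodup_append]
    refine ⟨hp.1.support_nodup, ?_, ?_⟩
    · exact (hq.1.support_nodup).tail
    · intro s hs s' hs' hss'; subst hss'
      have hsq : s ∈ q.support := List.mem_of_mem_tail hs'
      have hsb : s = b := hdisj s hs hsq
      rw [hsb] at hs'
      have hcons : q.support = b :: q.support.tail := q.support_eq_cons
      have hnd := hq.1.support_nodup
      rw [hcons] at hnd
      exact (List.nodup_cons.mp hnd).1 hs'
  refine ⟨hpath, ?_⟩
  have key : ∀ s ∈ p.support, ∀ t ∈ q.support, G.Adj s t →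
      s(s, t) ∈ (p.append q).edges := by
    intro s hs t ht hadj'
    by_cases hsb : s = b
    · subst hsb
      have := hq.2 s q.start_mem_support t ht hadj'
      rw [Walk.edges_append, List.mem_append]; right; exact this
    by_cases htb : t = b
    · subst htb
      have := hp.2 s hs t p.end_mem_support hadj'
      rw [Walk.edges_append, List.mem_append]; left; exact this
    · exact absurd hadj' (hadj s hs t ht hsb htb)
  intro s hs t ht hadj'
  rcases mem_support_append.mp hs with hs1 | hs1 <;>
    rcases mem_support_append.mp ht with ht1 | ht1
  · rw [Walk.edges_append, List.mem_append]; left; exact hp.2 s hs1 t ht1 hadj'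
  · exact key s hs1 t ht1 hadj'
  · rw [Sym2.eq_swap]; exact key t ht1 s hs1 hadj'.symm
  · rw [Walk.edges_append, List.mem_append]; right; exact hq.2 s hs1 t ht1 hadj'

lemma IsInducedPathW.of_append_left {a b c : V} {p : G.Walk a b} {q : G.Walk b c}
    (h : IsInducedPathW (p.append q)) : IsInducedPathW p := by
  refine ⟨h.1.of_append_left, ?_⟩
  intro s hs t ht hadj
  have hs' : s ∈ (p.append q).support := mem_support_append.mpr (Or.inl hs)
  have ht' : t ∈ (p.append q).support := mem_support_append.mpr (Or.inl ht)
  have he := h.2 s hs' t ht' hadj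
  rw [Walk.edges_append, List.mem_append] at he
  rcases he with he | he
  · exact he
  · exfalso
    have h1 : s ∈ q.support := q.fst_mem_support_of_mem_edges he
    have h2 : t ∈ q.support := q.snd_mem_support_of_mem_edges he
    have e1 : s = b := IsPath.eq_junction h.1 hs h1
    have e2 : t = b := IsPath.eq_junction h.1 ht h2
    rw [e1, e2] at hadj
    exact G.loopless.irrefl b hadj

lemma IsInducedPathW.of_append_right {a b c : V} {p : G.Walk a b} {q : G.Walk b c}
    (h : IsInducedPathW (p.append q)) : IsInducedPathW q := by
  refine ⟨h.1.of_append_right, ?_⟩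
  intro s hs t ht hadj
  have hs' : s ∈ (p.append q).support := mem_support_append.mpr (Or.inr hs)
  have ht' : t ∈ (p.append q).support := mem_support_append.mpr (Or.inr ht)
  have he := h.2 s hs' t ht' hadj
  rw [Walk.edges_append, List.mem_append] at he
  rcases he with he | he
  · exfalso
    have h1 : s ∈ p.support := p.fst_mem_support_of_mem_edges he
    have h2 : t ∈ p.support := p.snd_mem_support_of_mem_edges he
    have e1 : s = b := IsPath.eq_junction h.1 h1 hs
    have e2 : t = b := IsPath.eq_junction h.1 h2 ht
    rw [e1, e2] at hadj
    exact G.loopless.irrefl b hadj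
  · exact he

lemma IsInducedPathW.reverse {a b : V} {p : G.Walk a b} (h : IsInducedPathW p) :
    IsInducedPathW p.reverse := by
  refine ⟨h.1.reverse, ?_⟩
  intro s hs t ht hadj
  rw [Walk.support_reverse, List.mem_reverse] at hs ht
  rw [Walk.edges_reverse, List.mem_reverse]
  exact h.2 s hs t ht hadj

/-- First vertex on a walk satisfying a predicate, with prefix decomposition. -/
lemma exists_first_on_walk {u v : V} (p : G.Walk u v) (Q : V → Prop)
    (h : ∃ t ∈ p.support, Q t) :
    ∃ (z : V) (q : G.Walk u z) (r : G.Walk z v), p = q.append r ∧ Q z ∧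
      ∀ t ∈ q.support, Q t → t = z := by
  induction p with
  | nil =>
    obtain ⟨t, ht, hQ⟩ := h
    rw [Walk.support_nil, List.mem_singleton] at ht
    subst ht
    refine ⟨_, Walk.nil, Walk.nil, rfl, hQ, ?_⟩
    intro t' ht' _
    simpa using ht'
  | @cons a b c hadj q ih =>
    by_cases hQa : Q a
    · refine ⟨a, Walk.nil, Walk.cons hadj q, rfl, hQa, ?_⟩
      intro t' ht' _
      simpa using ht'
    · have h' : ∃ t ∈ q.support, Q t := by
        obtain ⟨t, ht, hQ⟩ := h
        rw [Walk.support_cons, List.mem_cons] at ht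
        rcases ht with rfl | ht
        · exact absurd hQ hQa
        · exact ⟨t, ht, hQ⟩
      obtain ⟨z, q1, r1, heq, hQz, hfirst⟩ := ih h'
      refine ⟨z, Walk.cons hadj q1, r1, by rw [Walk.cons_append, heq], hQz, ?_⟩
      intro t ht hQt
      rw [Walk.support_cons, List.mem_cons] at ht
      rcases ht with rfl | ht
      · exact absurd hQt hQa
      · exact hfirst t ht hQt

/-- Existence of an induced path within a vertex set, given any walk within that set. -/
lemma exists_induced_walk_in {S : Set V} {a b : V} (p0 : G.Walk a b)
    (hp0 : ∀ s ∈ p0.support, s ∈ S) :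
    ∃ p : G.Walk a b, IsInducedPathW p ∧ (∀ s ∈ p.support, s ∈ S) ∧ p.length ≤ p0.length := by
  classical
  set L : Set ℕ := {n | ∃ p : G.Walk a b, (∀ s ∈ p.support, s ∈ S) ∧ p.length = n} with hL
  have hne : L.Nonempty := ⟨p0.length, p0, hp0, rfl⟩
  obtain ⟨p1, hp1S, hp1len⟩ := Nat.sInf_mem hne
  set p := p1.bypass with hp
  have hpS : ∀ s ∈ p.support, s ∈ S := fun s hs => hp1S s (p1.support_bypass_subset hs)
  have hplen : p.length = sInf L := by
    have h1 : p.length ≤ p1.length := Walk.length_bypass_le p1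
    have h2 : sInf L ≤ p.length := Nat.sInf_le ⟨p, hpS, rfl⟩
    omega
  have hpath : p.IsPath := Walk.bypass_isPath p1
  have hmin : ∀ q : G.Walk a b, (∀ s ∈ q.support, s ∈ S) → p.length ≤ q.length := by
    intro q hq
    rw [hplen]
    exact Nat.sInf_le ⟨q, hq, rfl⟩
  have hlep0 : p.length ≤ p0.length := by
    rw [hplen]; exact Nat.sInf_le ⟨p0, hp0, rfl⟩
  refine ⟨p, ⟨hpath, ?_⟩, hpS, hlep0⟩
  -- chord-freeness by minimality
  intro s hs t ht hadj
  by_contra hne'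
  obtain ⟨q1, r1, hqr⟩ := Walk.mem_support_iff_exists_append.mp hs
  have htmem : t ∈ q1.support ∨ t ∈ r1.support := by
    rw [hqr, mem_support_append] at ht; exact ht
  rcases htmem with htm | htm
  · -- t before s : shortcut from t to b
    obtain ⟨q2, r2, hqr2⟩ := Walk.mem_support_iff_exists_append.mp htm
    -- q1 = q2.append r2, r2 : t -> s ; shortcut : q2 ++ cons (t~s) r1
    have hshort : ∀ x ∈ (q2.append (Walk.cons hadj.symm r1)).support, x ∈ S := by
      intro x hx
      rcases mem_support_append.mp hx with hx | hx
      · apply hpS; rw [hqr, hqr2]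
        exact mem_support_append.mpr (Or.inl (mem_support_append.mpr (Or.inl hx)))
      · rw [Walk.support_cons, List.mem_cons] at hx
        rcases hx with rfl | hx
        · apply hpS; rw [hqr]; exact mem_support_append.mpr (Or.inl htm)
        · apply hpS; rw [hqr]; exact mem_support_append.mpr (Or.inr hx)
    have hlen := hmin _ hshort
    rw [Walk.length_append, Walk.length_cons] at hlen
    have hlenp : p.length = q2.length + r2.length + r1.length := by
      rw [hqr, hqr2]
      simp [Walk.length_append]
    have hr2 : r2.length = 0 ∨ r2.length = 1 := by omega
    rcases hr2 with hr2' | hr2'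
    · have : t = s := Walk.eq_of_length_eq_zero hr2'
      subst this
      exact G.loopless.irrefl t hadj
    · -- r2 is a single edge t-s, so s(s,t) ∈ p.edges
      have : s(t, s) ∈ r2.edges := by
        cases r2 with
        | nil => simp at hr2'
        | cons h' r' =>
          cases r' with
          | nil => simp
          | cons h'' r'' => simp [Walk.length_cons] at hr2'
      have : s(t, s) ∈ p.edges := by
        rw [hqr, hqr2]
        rw [Walk.edges_append, Walk.edges_append]
        simp only [List.mem_append]
        exact Or.inl (Or.inr this)
      rw [Sym2.eq_swap] at this
      exact hne' this
  · -- t after s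
    obtain ⟨q2, r2, hqr2⟩ := Walk.mem_support_iff_exists_append.mp htm
    -- r1 = q2 ++ r2, q2 : s -> t ; shortcut : q1 ++ cons (s~t) r2
    have hshort : ∀ x ∈ (q1.append (Walk.cons hadj r2)).support, x ∈ S := by
      intro x hx
      rcases mem_support_append.mp hx with hx | hx
      · apply hpS; rw [hqr]; exact mem_support_append.mpr (Or.inl hx)
      · rw [Walk.support_cons, List.mem_cons] at hx
        rcases hx with rfl | hx
        · apply hpS; rw [hqr]; exact mem_support_append.mpr (Or.inl q1.end_mem_support)
        · apply hpS; rw [hqr, hqr2]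
          exact mem_support_append.mpr (Or.inr (mem_support_append.mpr (Or.inr hx)))
    have hlen := hmin _ hshort
    rw [Walk.length_append, Walk.length_cons] at hlen
    have hlenp : p.length = q1.length + (q2.length + r2.length) := by
      rw [hqr, hqr2]
      simp [Walk.length_append]
    have hq2 : q2.length = 0 ∨ q2.length = 1 := by omega
    rcases hq2 with hq2' | hq2'
    · have : s = t := Walk.eq_of_length_eq_zero hq2'
      subst this
      exact G.loopless.irrefl s hadj
    · have : s(s, t) ∈ q2.edges := by
        cases q2 with
        | nil => simp at hq2'
        | cons h' r' =>
          cases r' with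
          | nil => simp
          | cons h'' r'' => simp [Walk.length_cons] at hq2'
      have : s(s, t) ∈ p.edges := by
        rw [hqr, hqr2]
        rw [Walk.edges_append, Walk.edges_append]
        simp only [List.mem_append]
        exact Or.inr (Or.inl this)
      exact hne' this

end Infra2

section Infra3
open SimpleGraph Walk

variable {V : Type} {G : SimpleGraph V}

lemma fin_sub_val_one_iff {n : ℕ} (hn : 2 ≤ n) (s t : Fin n) :
    (t - s).val = 1 ↔ t.val = (s.val + 1) % n := by
  haveI : NeZero n := ⟨by omega⟩
  have h1 : ((1 : Fin n)).val = 1 := by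
    rw [Fin.val_one']
    exact Nat.mod_eq_of_lt (by omega)
  constructor
  · intro h
    have h2 : t - s = 1 := Fin.ext (by rw [h, h1])
    have ht : t = s + 1 := by
      have h3 := sub_eq_iff_eq_add.mp h2
      rw [h3, add_comm]
    rw [ht, Fin.add_def, h1]
  · intro h
    have ht : t = s + 1 := Fin.ext (by rw [Fin.add_def, h1, h])
    rw [ht]
    have h2 : s + 1 - s = (1 : Fin n) := add_sub_cancel_left s 1
    rw [h2, h1]

/-- An induced (chordless) cycle gives an embedding of `cycleGraph`. -/
lemma cycle_embedding_of_induced_cycle {a : V} {c : G.Walk a a} (hc : c.IsCycle)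
    (hind : ∀ x ∈ c.support, ∀ y ∈ c.support, G.Adj x y → s(x, y) ∈ c.edges) :
    Nonempty (cycleGraph c.length ↪g G) := by
  have h3 := hc.three_le_length
  set n := c.length with hn
  have hn2 : 2 ≤ n := by omega
  have hmemsup : ∀ m : ℕ, m ≤ n → c.getVert m ∈ c.support := fun m hm =>
    Walk.mem_support_iff_exists_getVert.mpr ⟨m, rfl, hm⟩
  have hgv_inj : ∀ i j : ℕ, i < n → j < n → c.getVert i = c.getVert j → i = j :=
    fun i j hi hj h => hc.getVert_inj hi hj h
  have gv_mod : ∀ m : ℕ, m ≤ n → c.getVert (m % n) = c.getVert m := by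
    intro m hm
    rcases Nat.lt_or_ge m n with h | h
    · rw [Nat.mod_eq_of_lt h]
    · have hmn : m = n := by omega
      subst hmn
      rw [Nat.mod_self, getVert_zero, hn, getVert_length]
  refine ⟨⟨⟨fun t => c.getVert t.val, ?_⟩, ?_⟩⟩
  · intro s t hst
    exact Fin.ext (hgv_inj _ _ s.isLt t.isLt hst)
  · intro s t
    show G.Adj (c.getVert s.val) (c.getVert t.val) ↔ _
    rw [cycleGraph_adj', fin_sub_val_one_iff hn2, fin_sub_val_one_iff hn2]
    constructor
    · intro hadj
      have he := hind _ (hmemsup s.val (le_of_lt s.isLt)) _ (hmemsup t.val (le_of_lt t.isLt))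
        hadj
      rw [Walk.mem_edges_iff_exists_getVert] at he
      obtain ⟨m, hm, hcase⟩ := he
      have hmod : c.getVert ((m + 1) % n) = c.getVert (m + 1) := gv_mod (m+1) (by omega)
      have hmodlt : (m + 1) % n < n := Nat.mod_lt _ (by omega)
      rcases hcase with ⟨h1, h2⟩ | ⟨h1, h2⟩
      · -- getVert m = f s, getVert (m+1) = f t
        right
        have hs : s.val = m := hgv_inj _ _ s.isLt hm h1.symm
        have ht : t.val = (m + 1) % n := hgv_inj _ _ t.isLt hmodlt (by rw [hmod]; exact h2.symm)
        rw [hs, ht]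
      · left
        have ht : t.val = m := hgv_inj _ _ t.isLt hm h1.symm
        have hs : s.val = (m + 1) % n := hgv_inj _ _ s.isLt hmodlt (by rw [hmod]; exact h2.symm)
        rw [hs, ht]
    · intro hcase
      rcases hcase with h | h
      · -- s.val = (t.val + 1) % n
        have : c.getVert s.val = c.getVert (t.val + 1) := by
          rw [h]; exact gv_mod _ (by have := t.isLt; omega)
        rw [this]
        exact (c.adj_getVert_succ t.isLt).symm
      · have : c.getVert t.val = c.getVert (s.val + 1) := by
          rw [h]; exact gv_mod _ (by have := s.isLt; omega)
        rw [this]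
        exact c.adj_getVert_succ s.isLt

end Infra3

section Infra4
open SimpleGraph Walk

variable {V : Type} {G : SimpleGraph V}

lemma dist_le_adj {v a b : V} (hadj : G.Adj a b) (hr : G.Reachable v a) :
    G.dist v b ≤ G.dist v a + 1 := by
  obtain ⟨p, hp⟩ := hr.exists_walk_length_eq_dist
  have := SimpleGraph.dist_le (p.append (Walk.cons hadj Walk.nil))
  simpa [Walk.length_append, hp] using this

lemma walk_adj_of_length_one {a b : V} {p : G.Walk a b} (h : p.length = 1) : G.Adj a b := by
  cases p with
  | nil => simp at h
  | cons hadj q =>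
    have : q.length = 0 := by simpa using h
    have := Walk.eq_of_length_eq_zero this
    rwa [← this]

lemma isPath_loop_length_zero {a : V} {p : G.Walk a a} (hp : p.IsPath) : p.length = 0 := by
  have h0 : p.getVert 0 = p.getVert p.length := by
    rw [Walk.getVert_zero, Walk.getVert_length]
  exact (hp.getVert_inj (Nat.zero_le _) (le_refl _) h0).symm

lemma no_adj_endpoints_of_induced_even {a b : V} {p : G.Walk a b}
    (h : IsInducedPathW p) (hlen : Even p.length) (hpos : 0 < p.length) : ¬ G.Adj a b := by
  intro hadj
  have he := h.2 a p.start_mem_support b p.end_mem_support hadj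
  rw [Walk.mem_edges_iff_exists_getVert] at he
  obtain ⟨m, hm, hcase⟩ := he
  rcases hcase with ⟨h1, h2⟩ | ⟨h1, h2⟩
  · have e1 : m = 0 := by
      have : p.getVert m = p.getVert 0 := by rw [h1, Walk.getVert_zero]
      exact h.1.getVert_inj (by omega) (by omega) this
    have e2 : m + 1 = p.length := by
      have : p.getVert (m+1) = p.getVert p.length := by rw [h2, Walk.getVert_length]
      exact h.1.getVert_inj (by omega) (le_refl _) this
    subst e1
    rw [← e2] at hlen
    simp [Nat.even_iff] at hlen
  · have e1 : m = p.length := by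
      have : p.getVert m = p.getVert p.length := by rw [h1, Walk.getVert_length]
      exact h.1.getVert_inj (by omega) (le_refl _) this
    omega

end Infra4

section Chain
open SimpleGraph Walk

variable {V : Type} {G : SimpleGraph V} {ℓ : ℕ}

lemma IsInducedPathW.copy {u v u' v' : V} {p : G.Walk u v} (h : IsInducedPathW p)
    (hu : u = u') (hv : v = v') : IsInducedPathW (p.copy hu hv) := by
  subst hu; subst hv; simpa using h

lemma PCP.mem_support_of_block (P : PCP G ℓ) {s : V} (m : Fin ℓ) (h : s ∈ P.block m) :
    s ∈ P.support := by
  simp only [PCP.support, Set.mem_union, Set.mem_iUnion]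
  exact Or.inl (Or.inl ⟨m, h⟩)

lemma PCP.mem_support_of_last (P : PCP G ℓ) {s : V} (h : s ∈ P.lastBlock) :
    s ∈ P.support := by
  simp only [PCP.support, Set.mem_union, Set.mem_iUnion]
  exact Or.inl (Or.inr h)

lemma PCP.mem_support_of_path (P : PCP G ℓ) {s : V} (m : Fin ℓ)
    (h : s ∈ (P.path m).support) : s ∈ P.support := by
  simp only [PCP.support, Set.mem_union, Set.mem_iUnion]
  exact Or.inr ⟨m, h⟩

lemma PCP.block_eq_of_mem (P : PCP G ℓ) {s : V} {m m' : Fin ℓ}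
    (h : s ∈ P.block m) (h' : s ∈ P.block m') : m = m' := by
  by_contra hne
  exact Set.disjoint_left.mp (P.blocks_disjoint m m' hne) h h'

lemma PCP.not_block_last (P : PCP G ℓ) {s : V} {m : Fin ℓ}
    (h : s ∈ P.block m) (h' : s ∈ P.lastBlock) : False :=
  Set.disjoint_left.mp (P.block_last_disjoint m) h h'

lemma PCP.path_eq_of_mem (P : PCP G ℓ) {s : V} {m m' : Fin ℓ}
    (h : s ∈ (P.path m).support) (h' : s ∈ (P.path m').support) : m = m' := by
  by_contra hne
  exact P.paths_disjoint m m' hne s h h'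

/-- The chain of blocks and paths from `x j1` to `x j2`. -/
lemma chain_exists (P : PCP G ℓ)
    (pE : (m : Fin ℓ) → G.Walk (P.x m.castSucc) (P.y m))
    (hind : ∀ m, IsInducedPathW (pE m))
    (hsub : ∀ m, ∀ s ∈ (pE m).support, s ∈ P.block m) :
    ∀ (d j1 j2 : ℕ) (h1 : j1 + d = j2) (h2 : j2 ≤ ℓ),
    ∃ w : G.Walk (P.x ⟨j1, by omega⟩) (P.x ⟨j2, by omega⟩),
      IsInducedPathW w ∧
      (∀ s ∈ w.support, s = P.x ⟨j2, by omega⟩ ∨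
        ∃ m : Fin ℓ, j1 ≤ (m:ℕ) ∧ (m:ℕ) < j2 ∧ (s ∈ (pE m).support ∨ s ∈ (P.path m).support)) := by
  intro d
  induction d with
  | zero =>
    intro j1 j2 h12 h2
    obtain rfl : j1 = j2 := by omega
    refine ⟨Walk.nil, ⟨Walk.IsPath.nil, by simp⟩, ?_⟩
    intro s hs
    left
    simpa using hs
  | succ d ihd =>
    intro j1 j2 h12 h2
    have hj1 : j1 < ℓ := by omega
    have hj1j2 : j1 < j2 := by omega
    set j1' : Fin ℓ := ⟨j1, hj1⟩ with hj1'def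
    have hj1val : (j1' : ℕ) = j1 := rfl
    obtain ⟨w', hw'ind, hw'loc⟩ := ihd (j1+1) j2 (by omega) h2
    have f2 : P.x ⟨j1+1, by omega⟩ = P.x j1'.succ := by
      exact congrArg P.x (Fin.ext rfl)
    have f1 : P.x j1'.castSucc = P.x ⟨j1, by omega⟩ := by
      exact congrArg P.x (Fin.ext rfl)
    set w'' : G.Walk (P.x j1'.succ) (P.x ⟨j2, by omega⟩) := w'.copy f2 rfl with hw''def
    have hw''ind : IsInducedPathW w'' := hw'ind.copy f2 rfl
    have hw''sup : ∀ s, s ∈ w''.support ↔ s ∈ w'.support := by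
      intro s; rw [hw''def, Walk.support_copy]
    have w''loc : ∀ s ∈ w''.support, s = P.x ⟨j2, by omega⟩ ∨
        ∃ m : Fin ℓ, j1 + 1 ≤ (m:ℕ) ∧ (m:ℕ) < j2 ∧
          (s ∈ (pE m).support ∨ s ∈ (P.path m).support) := by
      intro s hs
      exact hw'loc s ((hw''sup s).mp hs)
    have hxj2 : ∀ m : Fin ℓ, (m:ℕ) = j2 → P.x ⟨j2, by omega⟩ ∈ P.block m := by
      intro m hm
      have h := P.x_mem m
      have e : m.castSucc = (⟨j2, by omega⟩ : Fin (ℓ+1)) := Fin.ext (by simpa using hm)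
      rwa [e] at h
    have hxj2' : j2 = ℓ → P.x ⟨j2, by omega⟩ ∈ P.lastBlock := by
      intro h
      have e : (⟨j2, by omega⟩ : Fin (ℓ+1)) = Fin.last ℓ := Fin.ext (by simpa using h)
      rw [e]
      exact P.xlast_mem
    have hjunc2 : ∀ (m : Fin ℓ), (m : ℕ) = j1 + 1 → P.x m.castSucc = P.x j1'.succ := by
      intro m hm
      congr 1
      exact Fin.ext (by simpa using hm)
    have hjunclast : j1 + 1 = ℓ → P.x (Fin.last ℓ) = P.x j1'.succ := by
      intro h
      congr 1
      exact Fin.ext (by simp [Fin.val_succ, hj1val]; omega)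
    have hjuncj2 : j1 + 1 = j2 → P.x ⟨j2, by omega⟩ = P.x j1'.succ := by
      intro h
      congr 1
      exact Fin.ext (by simp [Fin.val_succ, hj1val]; omega)
    -- cond1 : path j1' and w'' intersect only in the junction
    have cond1 : ∀ s ∈ (P.path j1').support, s ∈ w''.support → s = P.x j1'.succ := by
      intro s hsp hsw
      rcases w''loc s hsw with heq | ⟨m, hm1, hm2, hc⟩
      · subst heq
        rcases Nat.lt_or_ge j2 ℓ with hlt | hge
        · rcases P.block_path_inter ⟨j2, hlt⟩ j1' _ (hxj2 ⟨j2, hlt⟩ rfl) hsp with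
            ⟨he, _⟩ | ⟨he, hs2⟩
          · exfalso
            have hval := congrArg Fin.val he
            simp [hj1'def] at hval
            omega
          · have hv : j1 + 1 = j2 := by simpa [hj1'def] using he
            exact (hjuncj2 hv)
        · have hj2ℓ : j2 = ℓ := by omega
          rcases P.last_path_inter j1' _ (hxj2' hj2ℓ) hsp with ⟨he, hs2⟩
          rw [hs2]
          exact hjunclast (by simpa [hj1'def] using he)
      · rcases hc with hc | hc
        · have hsb : s ∈ P.block m := hsub m s hc
          rcases P.block_path_inter m j1' s hsb hsp with ⟨he, _⟩ | ⟨he, hs2⟩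
          · exfalso
            have hval := congrArg Fin.val he
            simp [hj1'def] at hval
            omega
          · rw [hs2]
            exact hjunc2 m (by simp [hj1'def] at he; omega)
        · exfalso
          have he := P.path_eq_of_mem hsp hc
          have hval := congrArg Fin.val he
          simp [hj1'def] at hval
          omega
    have w''Psup : ∀ s ∈ w''.support, s ∈ P.support := by
      intro s hs
      rcases w''loc s hs with heq | ⟨m, _, _, hc | hc⟩
      · subst heq
        rcases Nat.lt_or_ge j2 ℓ with hlt | hge
        · exact P.mem_support_of_block _ (hxj2 ⟨j2, hlt⟩ rfl)
        · exact P.mem_support_of_last (hxj2' (by omega))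
      · exact P.mem_support_of_block m (hsub m s hc)
      · exact P.mem_support_of_path m hc
    have blockj1w'' : ∀ t ∈ w''.support, t ∈ P.block j1' → False := by
      intro t htw htb
      rcases w''loc t htw with heq | ⟨m, hm1, hm2, hc | hc⟩
      · subst heq
        rcases Nat.lt_or_ge j2 ℓ with hlt | hge
        · have he := P.block_eq_of_mem htb (hxj2 ⟨j2, hlt⟩ rfl)
          have hval := congrArg Fin.val he
          simp [hj1'def] at hval
          omega
        · exact P.not_block_last htb (hxj2' (by omega))
      · have he := P.block_eq_of_mem htb (hsub m t hc)
        have hval := congrArg Fin.val he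
        simp [hj1'def] at hval
        omega
      · rcases P.block_path_inter j1' m t htb hc with ⟨he, _⟩ | ⟨he, _⟩
        · have hval := congrArg Fin.val he
          simp [hj1'def] at hval
          omega
        · simp [hj1'def] at he
          omega
    -- cond2
    have cond2 : ∀ s ∈ (P.path j1').support, ∀ t ∈ w''.support,
        s ≠ P.x j1'.succ → t ≠ P.x j1'.succ → ¬ G.Adj s t := by
      intro s hsp t htw hs hn hadj
      rcases P.edges_within s t (P.mem_support_of_path j1' hsp) (w''Psup t htw) hadj with
        ⟨m0, hsb, htb⟩ | ⟨hsl, htl⟩ | ⟨m0, hsp0, htp0⟩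
      · rcases P.block_path_inter m0 j1' s hsb hsp with ⟨he, hs2⟩ | ⟨he, hs2⟩
        · rw [← he] at htb
          exact blockj1w'' t htw htb
        · refine hs (hs2.trans (hjunc2 m0 ?_))
          simp [hj1'def] at he
          omega
      · rcases P.last_path_inter j1' s hsl hsp with ⟨he, hs2⟩
        exact hs (hs2.trans (hjunclast (by simpa [hj1'def] using he)))
      · have hm0 : m0 = j1' := P.path_eq_of_mem hsp0 hsp
        rw [hm0] at htp0
        rcases w''loc t htw with heq | ⟨m, hm1, hm2, hc | hc⟩
        · subst heq
          rcases Nat.lt_or_ge j2 ℓ with hlt | hge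
          · rcases P.block_path_inter ⟨j2, hlt⟩ j1' _ (hxj2 ⟨j2, hlt⟩ rfl) htp0 with
              ⟨he, _⟩ | ⟨he, ht2⟩
            · have hval := congrArg Fin.val he
              simp [hj1'def] at hval
              omega
            · exact hn (hjuncj2 (by simpa [hj1'def] using he))
          · rcases P.last_path_inter j1' _ (hxj2' (by omega)) htp0 with ⟨he, ht2⟩
            exact hn (ht2.trans (hjunclast (by simpa [hj1'def] using he)))
        · have htbm : t ∈ P.block m := hsub m t hc
          rcases P.block_path_inter m j1' t htbm htp0 with ⟨he, _⟩ | ⟨he, ht2⟩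
          · have hval := congrArg Fin.val he
            simp [hj1'def] at hval
            omega
          · refine hn (ht2.trans (hjunc2 m ?_))
            simp [hj1'def] at he
            omega
        · have he := P.path_eq_of_mem htp0 hc
          have hval := congrArg Fin.val he
          simp [hj1'def] at hval
          omega
    -- the inner walk
    set inner : G.Walk (P.y j1') (P.x ⟨j2, by omega⟩) := (P.path j1').append w'' with hinnerdef
    have hinner_ind : IsInducedPathW inner :=
      IsInducedPathW.append (P.path_induced j1') hw''ind cond1 cond2
    have hinner_sup : ∀ s, s ∈ inner.support ↔ s ∈ (P.path j1').support ∨ s ∈ w''.support := by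
      intro s; rw [hinnerdef]; exact mem_support_append
    -- cond3
    have cond3 : ∀ s ∈ (pE j1').support, s ∈ inner.support → s = P.y j1' := by
      intro s hse hsi
      have hsb : s ∈ P.block j1' := hsub j1' s hse
      rcases (hinner_sup s).mp hsi with hsp | hsw
      · rcases P.block_path_inter j1' j1' s hsb hsp with ⟨_, hs2⟩ | ⟨he, _⟩
        · exact hs2
        · exfalso
          simp [hj1'def] at he
      · exact absurd hsb (fun h => blockj1w'' s hsw h)
    -- cond4
    have cond4 : ∀ s ∈ (pE j1').support, ∀ t ∈ inner.support,
        s ≠ P.y j1' → t ≠ P.y j1' → ¬ G.Adj s t := by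
      intro s hse t hti hs hn hadj
      have hsb : s ∈ P.block j1' := hsub j1' s hse
      have htPsup : t ∈ P.support := by
        rcases (hinner_sup t).mp hti with htp | htw
        · exact P.mem_support_of_path j1' htp
        · exact w''Psup t htw
      rcases P.edges_within s t (P.mem_support_of_block j1' hsb) htPsup hadj with
        ⟨m0, hsb0, htb0⟩ | ⟨hsl, htl⟩ | ⟨m0, hsp0, htp0⟩
      · have hm0 : m0 = j1' := P.block_eq_of_mem hsb0 hsb
        rw [hm0] at htb0
        rcases (hinner_sup t).mp hti with htp | htw
        · rcases P.block_path_inter j1' j1' t htb0 htp with ⟨_, ht2⟩ | ⟨he, _⟩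
          · exact hn ht2
          · simp [hj1'def] at he
        · exact blockj1w'' t htw htb0
      · exact P.not_block_last hsb hsl
      · rcases P.block_path_inter j1' m0 s hsb hsp0 with ⟨he, hs2⟩ | ⟨he, hs2⟩
        · exact hs hs2
        · have hm0j1 : (m0:ℕ) + 1 = j1 := by simpa [hj1'def] using he
          rcases (hinner_sup t).mp hti with htp | htw
          · have hee := P.path_eq_of_mem htp0 htp
            have hval := congrArg Fin.val hee
            simp [hj1'def] at hval
            omega
          · rcases w''loc t htw with heq | ⟨m, hm1, hm2, hc | hc⟩
            · subst heq
              rcases Nat.lt_or_ge j2 ℓ with hlt | hge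
              · rcases P.block_path_inter ⟨j2, hlt⟩ m0 _ (hxj2 ⟨j2, hlt⟩ rfl) htp0 with
                  ⟨hee, _⟩ | ⟨hee, _⟩
                · have hval := congrArg Fin.val hee
                  simp at hval
                  omega
                · simp at hee
                  omega
              · rcases P.last_path_inter m0 _ (hxj2' (by omega)) htp0 with ⟨hee, _⟩
                omega
            · have htbm : t ∈ P.block m := hsub m t hc
              rcases P.block_path_inter m m0 t htbm htp0 with ⟨hee, _⟩ | ⟨hee, _⟩
              · have hval := congrArg Fin.val hee
                omega
              · omega
            · have hee := P.path_eq_of_mem htp0 hc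
              have hval := congrArg Fin.val hee
              omega
    -- assemble
    set total : G.Walk (P.x j1'.castSucc) (P.x ⟨j2, by omega⟩) := (pE j1').append inner with
      htotaldef
    have htotal_ind : IsInducedPathW total :=
      IsInducedPathW.append (hind j1') hinner_ind cond3 cond4
    refine ⟨total.copy f1 rfl, htotal_ind.copy f1 rfl, ?_⟩
    intro s hs
    rw [Walk.support_copy] at hs
    rw [htotaldef] at hs
    rcases mem_support_append.mp hs with hse | hsi
    · right
      exact ⟨j1', le_of_eq hj1val.symm, by omega, Or.inl hse⟩
    · rcases (hinner_sup s).mp hsi with hsp | hsw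
      · right
        exact ⟨j1', le_of_eq hj1val.symm, by omega, Or.inr hsp⟩
      · rcases w''loc s hsw with heq | ⟨m, hm1, hm2, hc⟩
        · left; exact heq
        · right
          exact ⟨m, by omega, hm2, hc⟩

end Chain

section Infra5
open SimpleGraph Walk

variable {V : Type} {G : SimpleGraph V}

/-- Closing an induced path through two neighbors of an apex `x'` into a cycle. -/
lemma build_cycle_apex {x' z1 z2 : V} (seg : G.Walk z1 z2) (hseg : IsInducedPathW seg)
    (hx1 : G.Adj x' z1) (hx2 : G.Adj x' z2) (hxs : x' ∉ seg.support)
    (hnb : ∀ t ∈ seg.support, G.Adj x' t → t = z1 ∨ t = z2) (hne : z1 ≠ z2) :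
    ∃ c : G.Walk x' x', c.IsCycle ∧
      (∀ a ∈ c.support, ∀ b ∈ c.support, G.Adj a b → s(a, b) ∈ c.edges) ∧
      c.length = seg.length + 2 := by
  set q : G.Walk z1 x' := seg.append (Walk.cons hx2.symm Walk.nil) with hq
  have hqsup : ∀ t, t ∈ q.support ↔ t ∈ seg.support ∨ t = x' := by
    intro t
    rw [hq, mem_support_append]
    simp only [Walk.support_cons, Walk.support_nil, List.mem_cons, List.mem_singleton]
    constructor
    · rintro (h | rfl | rfl | h)
      · exact Or.inl h
      · exact Or.inl seg.end_mem_support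
      · exact Or.inr rfl
      · exact absurd h (by simp)
    · rintro (h | rfl)
      · exact Or.inl h
      · exact Or.inr (Or.inr (Or.inl rfl))
  have hqpath : q.IsPath := by
    rw [Walk.isPath_def, hq, Walk.support_append, List.nodup_append]
    refine ⟨hseg.1.support_nodup, by simp, ?_⟩
    intro t ht t' ht' htt'; subst htt'
    simp only [Walk.support_cons, Walk.support_nil, List.tail_cons, List.mem_singleton] at ht'
    subst ht'
    exact hxs ht
  have hqedges : ∀ e, e ∈ q.edges ↔ e ∈ seg.edges ∨ e = s(z2, x') := by
    intro e
    rw [hq, Walk.edges_append]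
    simp
  set c : G.Walk x' x' := Walk.cons hx1 q with hc
  have hcyc : c.IsCycle := by
    rw [hc, Walk.cons_isCycle_iff]
    refine ⟨hqpath, ?_⟩
    intro hmem
    rcases (hqedges _).mp hmem with hm | hm
    · exact hxs (seg.fst_mem_support_of_mem_edges hm)
    · rw [Sym2.eq_iff] at hm
      rcases hm with ⟨he1, he2⟩ | ⟨he1, he2⟩
      · exact G.ne_of_adj hx2 he1
      · exact hne he2
  have hcsup : ∀ t, t ∈ c.support ↔ t = x' ∨ t ∈ seg.support := by
    intro t
    rw [hc, Walk.support_cons]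
    simp only [List.mem_cons]
    rw [hqsup]
    tauto
  have hcedges : ∀ e, e ∈ c.edges ↔ e = s(x', z1) ∨ e ∈ seg.edges ∨ e = s(z2, x') := by
    intro e
    rw [hc, Walk.edges_cons]
    simp only [List.mem_cons]
    rw [hqedges]
  refine ⟨c, hcyc, ?_, ?_⟩
  · intro a ha b hb hadj
    rcases (hcsup a).mp ha with rfl | ha' <;> rcases (hcsup b).mp hb with rfl | hb'
    · exact absurd hadj (G.loopless.irrefl _)
    · rcases hnb b hb' hadj with rfl | rfl
      · exact (hcedges _).mpr (Or.inl rfl)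
      · exact (hcedges _).mpr (Or.inr (Or.inr (Sym2.eq_swap)))
    · rcases hnb a ha' hadj.symm with rfl | rfl
      · exact (hcedges _).mpr (Or.inl Sym2.eq_swap)
      · exact (hcedges _).mpr (Or.inr (Or.inr rfl))
    · exact (hcedges _).mpr (Or.inr (Or.inl (hseg.2 a ha' b hb' hadj)))
  · rw [hc, hq]
    simp [Walk.length_append]

/-- Closing an induced path via a root `u'`, apex `x'` and a return path `R`. -/
lemma build_cycle_root {x' u' o z2 : V} (seg : G.Walk o z2) (R : G.Walk x' u')
    (hseg : IsInducedPathW seg) (hR : IsInducedPathW R)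
    (hadj1 : G.Adj u' o) (hadj2 : G.Adj z2 x') (hxu : x' ≠ u')
    (hu's : ∀ t ∈ seg.support, G.Adj u' t → t = o)
    (hx's : ∀ t ∈ seg.support, G.Adj x' t → t = z2)
    (hRseg : ∀ t ∈ R.support, t ≠ x' → t ≠ u' → ∀ s ∈ seg.support, ¬ G.Adj t s)
    (hdisj : ∀ t ∈ R.support, t ∉ seg.support) :
    ∃ c : G.Walk u' u', c.IsCycle ∧
      (∀ a ∈ c.support, ∀ b ∈ c.support, G.Adj a b → s(a, b) ∈ c.edges) ∧
      c.length = seg.length + R.length + 2 := by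
  have hu'ns : u' ∉ seg.support := hdisj u' R.end_mem_support
  have hx'ns : x' ∉ seg.support := hdisj x' R.start_mem_support
  set q : G.Walk o u' := seg.append (Walk.cons hadj2 R) with hq
  have hqsup : ∀ t, t ∈ q.support ↔ t ∈ seg.support ∨ t ∈ R.support := by
    intro t
    rw [hq, mem_support_append]
    constructor
    · rintro (h | h)
      · exact Or.inl h
      · rw [Walk.support_cons, List.mem_cons] at h
        rcases h with rfl | h
        · exact Or.inl seg.end_mem_support
        · exact Or.inr h
    · rintro (h | h)
      · exact Or.inl h
      · right; rw [Walk.support_cons, List.mem_cons]; exact Or.inr h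
  have hqpath : q.IsPath := by
    rw [Walk.isPath_def, hq, Walk.support_append, List.nodup_append]
    refine ⟨hseg.1.support_nodup, ?_, ?_⟩
    · simp only [Walk.support_cons, List.tail_cons]
      exact hR.1.support_nodup
    · intro t ht t' ht' htt'; subst htt'
      simp only [Walk.support_cons, List.tail_cons] at ht'
      exact hdisj t ht' ht
  have hqedges : ∀ e, e ∈ q.edges ↔ e ∈ seg.edges ∨ e = s(z2, x') ∨ e ∈ R.edges := by
    intro e
    rw [hq, Walk.edges_append]
    simp
  set c : G.Walk u' u' := Walk.cons hadj1 q with hc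
  have hcyc : c.IsCycle := by
    rw [hc, Walk.cons_isCycle_iff]
    refine ⟨hqpath, ?_⟩
    intro hmem
    rcases (hqedges _).mp hmem with hm | hm | hm
    · exact hu'ns (seg.fst_mem_support_of_mem_edges hm)
    · rw [Sym2.eq_iff] at hm
      rcases hm with ⟨he1, he2⟩ | ⟨he1, he2⟩
      · exact hu'ns (he1 ▸ seg.end_mem_support)
      · exact hxu he1.symm
    · exact hdisj o (R.fst_mem_support_of_mem_edges (by rwa [Sym2.eq_swap] at hm))
        seg.start_mem_support
  have hcsup : ∀ t, t ∈ c.support ↔ t ∈ seg.support ∨ t ∈ R.support := by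
    intro t
    rw [hc, Walk.support_cons, List.mem_cons, hqsup]
    constructor
    · rintro (rfl | h)
      · exact Or.inr R.end_mem_support
      · exact h
    · intro h; exact Or.inr h
  have hcedges : ∀ e, e ∈ c.edges ↔
      e = s(u', o) ∨ e ∈ seg.edges ∨ e = s(z2, x') ∨ e ∈ R.edges := by
    intro e
    rw [hc, Walk.edges_cons, List.mem_cons, hqedges]
  have hmix : ∀ a ∈ seg.support, ∀ b ∈ R.support, G.Adj a b → s(a, b) ∈ c.edges := by
    intro a ha b hb hadj
    by_cases hbx : b = x'
    · subst hbx
      have : a = z2 := hx's a ha hadj.symm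
      subst this
      exact (hcedges _).mpr (Or.inr (Or.inr (Or.inl rfl)))
    by_cases hbu : b = u'
    · subst hbu
      have : a = o := hu's a ha hadj.symm
      subst this
      exact (hcedges _).mpr (Or.inl Sym2.eq_swap)
    · exact absurd hadj.symm (hRseg b hb hbx hbu a ha)
  refine ⟨c, hcyc, ?_, ?_⟩
  · intro a ha b hb hadj
    rcases (hcsup a).mp ha with ha' | ha' <;> rcases (hcsup b).mp hb with hb' | hb'
    · exact (hcedges _).mpr (Or.inr (Or.inl (hseg.2 a ha' b hb' hadj)))
    · exact hmix a ha' b hb' hadj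
    · rw [Sym2.eq_swap]; exact hmix b hb' a ha' hadj.symm
    · exact (hcedges _).mpr (Or.inr (Or.inr (Or.inr (hR.2 a ha' b hb' hadj))))
  · rw [hc, hq]
    simp [Walk.length_append]
    omega

end Infra5

/-- Let `G ∈ C_{3,2k≥6}` and let `P` be a rooted PCP of order `ℓ` in the
level `N_k` (`k ≥ 1`). If `x' ∈ N_{k-1}` has a neighbor in the last block `H`, then `x'`
has a neighbor in every regular block `G_i`. -/
theorem neighbor_in_last_block_neighbor_everywhere (V : Type) [Fintype V]
    (G : SimpleGraph V) (h3 : G.CliqueFree 3)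
    (heven : ∀ n : ℕ, 6 ≤ n → Even n → NoInducedCycle G n)
    (v : V) (k ℓ : ℕ) (hk : 1 ≤ k) (P : PCP G ℓ)
    (hroot : P.IsRootedInLevel v k)
    (x' : V) (hx' : x' ∈ level G v (k - 1))
    (hnb : ∃ w ∈ P.lastBlock, G.Adj x' w) :
    ∀ i : Fin ℓ, ∃ w ∈ P.block i, G.Adj x' w := by
  classical
  open SimpleGraph Walk in
  obtain ⟨hsup, u', hu'lev, hu'adj, hu'only⟩ := hroot
  obtain ⟨y', hy'H, hy'adj⟩ := hnb
  intro i
  by_contra hno'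
  push_neg at hno'
  have hno : ∀ t ∈ P.block i, ¬ G.Adj x' t := fun t ht hadj => (hno' t ht) hadj
  have hiℓ : (i : ℕ) < ℓ := i.isLt
  have hl1 : 1 ≤ ℓ := by omega
  -- level facts
  have hlevP : ∀ s ∈ P.support, G.Reachable v s ∧ G.dist v s = k := fun s hs => hsup hs
  have hx're : G.Reachable v x' := hx'.1
  have hx'dist : G.dist v x' = k - 1 := hx'.2
  have hu're : G.Reachable v u' := hu'lev.1
  have hu'dist : G.dist v u' = k - 1 := hu'lev.2
  have hx'nP : ∀ s ∈ P.support, x' ≠ s := by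
    intro s hs heq
    have := (hlevP s hs).2
    rw [← heq] at this
    omega
  have hu'nP : ∀ s ∈ P.support, u' ≠ s := by
    intro s hs heq
    have := (hlevP s hs).2
    rw [← heq] at this
    omega
  -- origin facts
  have horigin_mem : P.origin ∈ P.block ⟨0, by omega⟩ := by
    have h := P.x_mem ⟨0, by omega⟩
    have e : (⟨0, by omega⟩ : Fin ℓ).castSucc = (0 : Fin (ℓ+1)) := Fin.ext rfl
    rw [e] at h
    exact h
  have hy'ne_origin : y' ≠ P.origin := by
    intro heq
    exact P.not_block_last (heq ▸ horigin_mem) hy'H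
  have hxu : x' ≠ u' := by
    intro heq
    exact hu'only y' (P.mem_support_of_last hy'H) hy'ne_origin (heq ▸ hy'adj)
  have hu'adj_mem : ∀ t ∈ P.support, G.Adj u' t → t = P.origin := by
    intro t ht hadj
    by_contra hne
    exact hu'only t ht hne hadj
  -- chosen even paths
  choose pE hpE using P.even_path
  have pEind : ∀ m, IsInducedPathW (pE m) := fun m => (hpE m).1
  have pEsub : ∀ m, ∀ s ∈ (pE m).support, s ∈ P.block m := fun m => (hpE m).2.1
  have pEeven : ∀ m, Even (pE m).length := fun m => (hpE m).2.2
  obtain ⟨pO, pOind, pOsub, pOodd⟩ := P.odd_path i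
  -- x i ≠ y i and non-adjacent
  have hxy_ne : P.x i.castSucc ≠ P.y i := by
    intro heq
    have h0 := isPath_loop_length_zero (p := (pO.copy rfl heq.symm)) (pOind.copy rfl heq.symm).1
    rw [Walk.length_copy] at h0
    rw [h0] at pOodd
    simp at pOodd
  have hpEpos : 1 ≤ (pE i).length := by
    by_contra h
    push_neg at h
    exact hxy_ne (Walk.eq_of_length_eq_zero (p := pE i) (by omega))
  have hadj_xy : ¬ G.Adj (P.x i.castSucc) (P.y i) :=
    no_adj_endpoints_of_induced_even (pEind i) (pEeven i) (by omega)
  -- chains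
  obtain ⟨A0, hA0ind, hA0loc⟩ := chain_exists P pE pEind pEsub (i : ℕ) 0 (i : ℕ)
    (by omega) (by omega)
  obtain ⟨C0, hC0ind, hC0loc⟩ := chain_exists P pE pEind pEsub (ℓ - ((i : ℕ)+1)) ((i : ℕ)+1) ℓ
    (by omega) (by omega)
  have eA0 : P.x ⟨0, by omega⟩ = P.origin := congrArg P.x (Fin.ext rfl)
  have eA1 : P.x ⟨(i : ℕ), by omega⟩ = P.x i.castSucc := congrArg P.x (Fin.ext rfl)
  have eC0 : P.x ⟨(i : ℕ)+1, by omega⟩ = P.x i.succ := congrArg P.x (Fin.ext rfl)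
  have eC1 : P.x ⟨ℓ, by omega⟩ = P.x (Fin.last ℓ) := congrArg P.x (Fin.ext rfl)
  set A : G.Walk P.origin (P.x i.castSucc) := A0.copy eA0 eA1 with hAdef
  have hAind : IsInducedPathW A := hA0ind.copy eA0 eA1
  have descA : ∀ s ∈ A.support, s = P.x i.castSucc ∨
      ∃ m : Fin ℓ, (m:ℕ) < (i:ℕ) ∧ (s ∈ (pE m).support ∨ s ∈ (P.path m).support) := by
    intro s hs
    rw [hAdef, Walk.support_copy] at hs
    rcases hA0loc s hs with heq | ⟨m, _, hm2, hc⟩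
    · left; rw [heq, eA1]
    · right; exact ⟨m, hm2, hc⟩
  set C : G.Walk (P.x i.succ) (P.x (Fin.last ℓ)) := C0.copy eC0 eC1 with hCdef
  have hCind : IsInducedPathW C := hC0ind.copy eC0 eC1
  have descC : ∀ s ∈ C.support, s = P.x (Fin.last ℓ) ∨
      ∃ m : Fin ℓ, (i:ℕ)+1 ≤ (m:ℕ) ∧ (s ∈ (pE m).support ∨ s ∈ (P.path m).support) := by
    intro s hs
    rw [hCdef, Walk.support_copy] at hs
    rcases hC0loc s hs with heq | ⟨m, hm1, _, hc⟩
    · left; rw [heq, eC1]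
    · right; exact ⟨m, hm1, hc⟩
  -- the path inside the last block
  have hreachH : (G.induce P.lastBlock).Reachable ⟨P.x (Fin.last ℓ), P.xlast_mem⟩ ⟨y', hy'H⟩ :=
    P.last_connected.preconnected _ _
  obtain ⟨pH⟩ := hreachH
  have hHp0 : ∃ Hp0 : G.Walk (P.x (Fin.last ℓ)) y', ∀ s ∈ Hp0.support, s ∈ P.lastBlock := by
    refine ⟨pH.map ⟨Subtype.val, fun {a b} h => h⟩, ?_⟩
    intro s hs
    rw [Walk.support_map, List.mem_map] at hs
    obtain ⟨a, _, rfl⟩ := hs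
    exact a.2
  obtain ⟨Hp0, hHp0sub⟩ := hHp0
  obtain ⟨Hp, hHpind, hHpsub, -⟩ := exists_induced_walk_in Hp0 hHp0sub
  -- junction equalities
  have ej1 : (i : ℕ) + 1 = ℓ → P.x i.succ = P.x (Fin.last ℓ) := by
    intro h
    exact congrArg P.x (Fin.ext (by simp [Fin.val_succ, h]))
  have ej2 : ∀ m : Fin ℓ, (m : ℕ) = (i : ℕ) + 1 → P.x m.castSucc = P.x i.succ := by
    intro m hm
    exact congrArg P.x (Fin.ext (by simp [Fin.val_succ, hm]))
  -- inner2 = C ++ Hp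
  have dC1 : ∀ s ∈ C.support, s ∈ Hp.support → s = P.x (Fin.last ℓ) := by
    intro s hsC hsH
    have hsl : s ∈ P.lastBlock := hHpsub s hsH
    rcases descC s hsC with heq | ⟨m, hm1, hc | hc⟩
    · exact heq
    · exact absurd hsl (fun h => P.not_block_last (pEsub m s hc) h)
    · exact (P.last_path_inter m s hsl hc).2
  have dC2 : ∀ s ∈ C.support, ∀ t ∈ Hp.support,
      s ≠ P.x (Fin.last ℓ) → t ≠ P.x (Fin.last ℓ) → ¬ G.Adj s t := by
    intro s hsC t htH hs ht hadj
    have htl : t ∈ P.lastBlock := hHpsub t htH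
    have hsP : s ∈ P.support := by
      rcases descC s hsC with heq | ⟨m, _, hc | hc⟩
      · rw [heq]; exact P.mem_support_of_last P.xlast_mem
      · exact P.mem_support_of_block m (pEsub m s hc)
      · exact P.mem_support_of_path m hc
    rcases P.edges_within s t hsP (P.mem_support_of_last htl) hadj with
      ⟨m0, _, htb0⟩ | ⟨hsl0, _⟩ | ⟨m0, hsp0, htp0⟩
    · exact P.not_block_last htb0 htl
    · rcases descC s hsC with heq | ⟨m, _, hc | hc⟩
      · exact hs heq
      · exact P.not_block_last (pEsub m s hc) hsl0
      · exact hs (P.last_path_inter m s hsl0 hc).2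
    · exact ht (P.last_path_inter m0 t htl htp0).2
  set inner2 : G.Walk (P.x i.succ) y' := C.append Hp with hinner2def
  have hinner2ind : IsInducedPathW inner2 := IsInducedPathW.append hCind hHpind dC1 dC2
  have hinner2sup : ∀ s, s ∈ inner2.support ↔ s ∈ C.support ∨ s ∈ Hp.support := by
    intro s; rw [hinner2def]; exact mem_support_append
  -- B = path i ++ inner2
  have dB1 : ∀ s ∈ (P.path i).support, s ∈ inner2.support → s = P.x i.succ := by
    intro s hsp hsi
    rcases (hinner2sup s).mp hsi with hsC | hsH
    · rcases descC s hsC with heq | ⟨m, hm1, hc | hc⟩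
      · rw [heq] at hsp ⊢
        rcases P.last_path_inter i _ P.xlast_mem hsp with ⟨he, _⟩
        exact (ej1 he).symm
      · rcases P.block_path_inter m i s (pEsub m s hc) hsp with ⟨he, _⟩ | ⟨he, hs2⟩
        · exfalso
          have := congrArg Fin.val he
          omega
        · rw [hs2]
          exact ej2 m (by omega)
      · exfalso
        have := congrArg Fin.val (P.path_eq_of_mem hsp hc)
        omega
    · have hsl : s ∈ P.lastBlock := hHpsub s hsH
      rcases P.last_path_inter i s hsl hsp with ⟨he, hs2⟩
      rw [hs2]
      exact (ej1 he).symm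
  have dB2 : ∀ s ∈ (P.path i).support, ∀ t ∈ inner2.support,
      s ≠ P.x i.succ → t ≠ P.x i.succ → ¬ G.Adj s t := by
    intro s hsp t hti hs ht hadj
    have htP : t ∈ P.support := by
      rcases (hinner2sup t).mp hti with htC | htH
      · rcases descC t htC with heq | ⟨m, _, hc | hc⟩
        · rw [heq]; exact P.mem_support_of_last P.xlast_mem
        · exact P.mem_support_of_block m (pEsub m t hc)
        · exact P.mem_support_of_path m hc
      · exact P.mem_support_of_last (hHpsub t htH)
    rcases P.edges_within s t (P.mem_support_of_path i hsp) htP hadj with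
      ⟨m0, hsb0, htb0⟩ | ⟨hsl0, htl0⟩ | ⟨m0, hsp0, htp0⟩
    · -- same block m0
      rcases P.block_path_inter m0 i s hsb0 hsp with ⟨he, hs2⟩ | ⟨he, hs2⟩
      · -- m0 = i, s = y i ; t ∈ block i ∩ inner2 : impossible
        rw [← he] at htb0
        rcases (hinner2sup t).mp hti with htC | htH
        · rcases descC t htC with heq | ⟨m, hm1, hc | hc⟩
          · rw [heq] at htb0
            exact P.not_block_last htb0 P.xlast_mem
          · have hee := P.block_eq_of_mem (pEsub m t hc) htb0
            have := congrArg Fin.val hee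
            omega
          · rcases P.block_path_inter i m t htb0 hc with ⟨hee, _⟩ | ⟨hee, _⟩
            · have := congrArg Fin.val hee; omega
            · have : (m:ℕ) + 1 = (i:ℕ) := by simpa using hee
              omega
        · exact P.not_block_last htb0 (hHpsub t htH)
      · -- s = x i.succ : excluded
        refine hs (hs2.trans (ej2 m0 ?_))
        omega
    · rcases P.last_path_inter i s hsl0 hsp with ⟨he, hs2⟩
      exact hs (hs2.trans (ej1 he).symm)
    · -- same path m0 ; m0 = i
      have hm0 : m0 = i := P.path_eq_of_mem hsp0 hsp
      rw [hm0] at htp0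
      exact ht (dB1 t htp0 hti)
  set B : G.Walk (P.y i) y' := (P.path i).append inner2 with hBdef
  have hBind : IsInducedPathW B := IsInducedPathW.append (P.path_induced i) hinner2ind dB1 dB2
  have descB : ∀ s ∈ B.support, s ∈ (P.path i).support ∨
      (∃ m : Fin ℓ, (i:ℕ)+1 ≤ (m:ℕ) ∧ (s ∈ (pE m).support ∨ s ∈ (P.path m).support)) ∨
      s ∈ Hp.support := by
    intro s hs
    rw [hBdef] at hs
    rcases mem_support_append.mp hs with hsp | hsi
    · exact Or.inl hsp
    · rcases (hinner2sup s).mp hsi with hsC | hsH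
      · rcases descC s hsC with heq | ⟨m, hm1, hc⟩
        · right; right; rw [heq]; exact Hp.start_mem_support
        · exact Or.inr (Or.inl ⟨m, hm1, hc⟩)
      · exact Or.inr (Or.inr hsH)
    -- membership of A and B supports in P.support
  have hAsubP : ∀ s ∈ A.support, s ∈ P.support := by
    intro s hs
    rcases descA s hs with heq | ⟨m, _, hc | hc⟩
    · rw [heq]; exact P.mem_support_of_block i (P.x_mem i)
    · exact P.mem_support_of_block m (pEsub m s hc)
    · exact P.mem_support_of_path m hc
  have hBsubP : ∀ s ∈ B.support, s ∈ P.support := by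
    intro s hs
    rcases descB s hs with hsp | ⟨m, _, hc | hc⟩ | hsH
    · exact P.mem_support_of_path i hsp
    · exact P.mem_support_of_block m (pEsub m s hc)
    · exact P.mem_support_of_path m hc
    · exact P.mem_support_of_last (hHpsub s hsH)
  -- location lemmas
  have LB_blocki : ∀ s ∈ B.support, s ∈ P.block i → s = P.y i := by
    intro s hs hbl
    rcases descB s hs with hsp | ⟨m, hm1, hc | hc⟩ | hsH
    · rcases P.block_path_inter i i s hbl hsp with ⟨_, hs2⟩ | ⟨he, _⟩
      · exact hs2
      · exfalso; omega
    · have hee := P.block_eq_of_mem hbl (pEsub m s hc)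
      have := congrArg Fin.val hee; omega
    · rcases P.block_path_inter i m s hbl hc with ⟨hee, _⟩ | ⟨hee, _⟩
      · have := congrArg Fin.val hee; omega
      · have : (m:ℕ)+1 = (i:ℕ) := by simpa using hee
        omega
    · exact absurd (hHpsub s hsH) (fun h => P.not_block_last hbl h)
  have LA_blocki : ∀ s ∈ A.support, s ∈ P.block i → s = P.x i.castSucc := by
    intro s hs hbl
    rcases descA s hs with heq | ⟨m, hm1, hc | hc⟩
    · exact heq
    · have hee := P.block_eq_of_mem hbl (pEsub m s hc)
      have := congrArg Fin.val hee; omega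
    · rcases P.block_path_inter i m s hbl hc with ⟨hee, _⟩ | ⟨_, hs2⟩
      · have := congrArg Fin.val hee; omega
      · exact hs2
  have LA_path : ∀ s ∈ A.support, ∀ m : Fin ℓ, s ∈ (P.path m).support → (m:ℕ) < (i:ℕ) := by
    intro s hs m hsm
    rcases descA s hs with heq | ⟨m0, hm0, hc | hc⟩
    · rw [heq] at hsm
      rcases P.block_path_inter i m _ (P.x_mem i) hsm with ⟨hee, hs2⟩ | ⟨hee, _⟩
      · exact absurd hs2 hxy_ne
      · have : (m:ℕ)+1 = (i:ℕ) := by simpa using hee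
        omega
    · rcases P.block_path_inter m0 m s (pEsub m0 s hc) hsm with ⟨hee, _⟩ | ⟨hee, _⟩
      · have := congrArg Fin.val hee; omega
      · have : (m:ℕ)+1 = (m0:ℕ) := by simpa using hee
        omega
    · have := congrArg Fin.val (P.path_eq_of_mem hsm hc)
      omega
  have LA_nolast : ∀ s ∈ A.support, s ∈ P.lastBlock → False := by
    intro s hs hsl
    rcases descA s hs with heq | ⟨m, hm1, hc | hc⟩
    · exact P.not_block_last (heq ▸ P.x_mem i) hsl
    · exact P.not_block_last (pEsub m s hc) hsl
    · rcases P.last_path_inter m s hsl hc with ⟨hee, _⟩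
      omega
  have LB_path : ∀ t ∈ B.support, ∀ m : Fin ℓ, t ∈ (P.path m).support → (i:ℕ) ≤ (m:ℕ) := by
    intro t ht m htm
    rcases descB t ht with hsp | ⟨m0, hm0, hc | hc⟩ | hsH
    · have := congrArg Fin.val (P.path_eq_of_mem htm hsp)
      omega
    · rcases P.block_path_inter m0 m t (pEsub m0 t hc) htm with ⟨hee, _⟩ | ⟨hee, _⟩
      · have := congrArg Fin.val hee; omega
      · have : (m:ℕ)+1 = (m0:ℕ) := by simpa using hee
        omega
    · have := congrArg Fin.val (P.path_eq_of_mem htm hc)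
      omega
    · rcases P.last_path_inter m t (hHpsub t hsH) htm with ⟨hee, _⟩
      omega
  have LB_block : ∀ t ∈ B.support, ∀ m : Fin ℓ, t ∈ P.block m → (i:ℕ) ≤ (m:ℕ) := by
    intro t ht m htm
    rcases descB t ht with hsp | ⟨m0, hm0, hc | hc⟩ | hsH
    · rcases P.block_path_inter m i t htm hsp with ⟨hee, _⟩ | ⟨hee, _⟩
      · have := congrArg Fin.val hee; omega
      · have : (i:ℕ)+1 = (m:ℕ) := by simpa using hee
        omega
    · have hee := P.block_eq_of_mem htm (pEsub m0 t hc)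
      have := congrArg Fin.val hee; omega
    · rcases P.block_path_inter m m0 t htm hc with ⟨hee, _⟩ | ⟨hee, _⟩
      · have := congrArg Fin.val hee; omega
      · have : (m0:ℕ)+1 = (m:ℕ) := by simpa using hee
        omega
    · exact absurd (hHpsub t hsH) (fun h => P.not_block_last htm h)
  have LA_block : ∀ s ∈ A.support, ∀ m : Fin ℓ, s ∈ P.block m →
      (m:ℕ) < (i:ℕ) ∨ ((m:ℕ) = (i:ℕ) ∧ s = P.x i.castSucc) := by
    intro s hs m hsm
    rcases descA s hs with heq | ⟨m0, hm0, hc | hc⟩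
    · right
      have e := P.block_eq_of_mem (heq ▸ P.x_mem i) hsm
      have := congrArg Fin.val e
      exact ⟨this.symm, heq⟩
    · have e := P.block_eq_of_mem (pEsub m0 s hc) hsm
      have := congrArg Fin.val e; omega
    · rcases P.block_path_inter m m0 s hsm hc with ⟨hee, _⟩ | ⟨hee, hs2⟩
      · have := congrArg Fin.val hee; omega
      · have hv : (m0:ℕ)+1 = (m:ℕ) := by simpa using hee
        rcases Nat.lt_or_ge (m:ℕ) (i:ℕ) with h | h
        · exact Or.inl h
        · right
          have hmi : (m:ℕ) = (i:ℕ) := by omega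
          refine ⟨hmi, ?_⟩
          rw [hs2]
          exact congrArg P.x (Fin.ext (by simp [hmi]))
  -- A and B are disjoint
  have LAB_disj : ∀ s ∈ A.support, s ∈ B.support → False := by
    intro s hsA hsB
    rcases descA s hsA with heq | ⟨m, hm1, hc | hc⟩
    · have : s = P.y i := LB_blocki s hsB (heq ▸ P.x_mem i)
      exact hxy_ne (heq ▸ this : P.x i.castSucc = P.y i)
    · have := LB_block s hsB m (pEsub m s hc)
      omega
    · have := LB_path s hsB m hc
      omega
  -- no adjacency between A and B
  have LadjAB : ∀ s ∈ A.support, ∀ t ∈ B.support, ¬ G.Adj s t := by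
    intro s hsA t htB hadj
    rcases P.edges_within s t (hAsubP s hsA) (hBsubP t htB) hadj with
      ⟨m0, hsb0, htb0⟩ | ⟨hsl0, htl0⟩ | ⟨m0, hsp0, htp0⟩
    · have h1 := LA_block s hsA m0 hsb0
      have h2 := LB_block t htB m0 htb0
      rcases h1 with h1 | ⟨h1, hs2⟩
      · omega
      · have ht2 : t = P.y i := LB_blocki t htB (by
          have : m0 = i := Fin.ext (by omega)
          rwa [this] at htb0)
        rw [hs2, ht2] at hadj
        exact hadj_xy hadj
    · exact LA_nolast s hsA hsl0
    · have h1 := LA_path s hsA m0 hsp0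
      have h2 := LB_path t htB m0 htp0
      omega
  -- adjacency from A into block i forces the junction
  have LadjA_blocki : ∀ s ∈ A.support, ∀ t ∈ P.block i, G.Adj s t →
      s = P.x i.castSucc ∨ t = P.x i.castSucc := by
    intro s hsA t htb hadj
    rcases P.edges_within s t (hAsubP s hsA) (P.mem_support_of_block i htb) hadj with
      ⟨m0, hsb0, htb0⟩ | ⟨hsl0, htl0⟩ | ⟨m0, hsp0, htp0⟩
    · have hm0i : m0 = i := P.block_eq_of_mem htb0 htb
      rw [hm0i] at hsb0
      exact Or.inl (LA_blocki s hsA hsb0)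
    · exact absurd htl0 (fun h => P.not_block_last htb h)
    · have hlt := LA_path s hsA m0 hsp0
      rcases P.block_path_inter i m0 t htb htp0 with ⟨hee, _⟩ | ⟨hee, ht2⟩
      · have := congrArg Fin.val hee; omega
      · exact Or.inr ht2
  -- adjacency from block i into B forces y i
  have LadjB_blocki : ∀ s ∈ P.block i, ∀ t ∈ B.support, G.Adj s t →
      s = P.y i ∨ t = P.y i := by
    intro s hsb t htB hadj
    rcases P.edges_within s t (P.mem_support_of_block i hsb) (hBsubP t htB) hadj with
      ⟨m0, hsb0, htb0⟩ | ⟨hsl0, htl0⟩ | ⟨m0, hsp0, htp0⟩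
    · have hm0i : m0 = i := P.block_eq_of_mem hsb0 hsb
      rw [hm0i] at htb0
      exact Or.inr (LB_blocki t htB htb0)
    · exact absurd hsl0 (fun h => P.not_block_last hsb h)
    · rcases P.block_path_inter i m0 s hsb hsp0 with ⟨hee, hs2⟩ | ⟨hee, hs2⟩
      · exact Or.inl hs2
      · exfalso
        have hv : (m0:ℕ)+1 = (i:ℕ) := by simpa using hee
        have := LB_path t htB m0 htp0
        omega
    -- first neighbor of x' along B
  have hQB : ∃ t ∈ B.support, G.Adj x' t := ⟨y', B.end_mem_support, hy'adj⟩
  obtain ⟨z2, Bpre, Bpost, hBsplit, hz2adj, hfirst⟩ :=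
    exists_first_on_walk B (fun t => G.Adj x' t) hQB
  have hBpre_ind : IsInducedPathW Bpre := by
    have h1 : IsInducedPathW (Bpre.append Bpost) := by rw [← hBsplit]; exact hBind
    exact h1.of_append_left
  have hBpre_sub : ∀ s ∈ Bpre.support, s ∈ B.support := by
    intro s hs; rw [hBsplit]; exact mem_support_append.mpr (Or.inl hs)
  have hz2B : z2 ∈ B.support := hBpre_sub _ Bpre.end_mem_support
  have hz2_ne_yi : z2 ≠ P.y i := by
    intro h
    exact hno z2 (h ▸ P.y_mem i) hz2adj
  have hBpre_len : 1 ≤ Bpre.length := by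
    by_contra h; push_neg at h
    exact hz2_ne_yi (Walk.eq_of_length_eq_zero (p := Bpre) (by omega)).symm
  -- the parity finish
  have final : ∀ D : ℕ, 4 ≤ D →
      (∀ M : G.Walk (P.x i.castSucc) (P.y i), IsInducedPathW M →
        (∀ s ∈ M.support, s ∈ P.block i) →
        ∃ (a : V) (c : G.Walk a a), c.IsCycle ∧
          (∀ p ∈ c.support, ∀ q ∈ c.support, G.Adj p q → s(p, q) ∈ c.edges) ∧
          c.length = M.length + D) → False := by
    intro D hD hkey
    have hchoose : ∃ M : G.Walk (P.x i.castSucc) (P.y i), IsInducedPathW M ∧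
        (∀ s ∈ M.support, s ∈ P.block i) ∧ 1 ≤ M.length ∧ Even (M.length + D) := by
      rcases Nat.even_or_odd D with hDe | hDo
      · exact ⟨pE i, pEind i, pEsub i, hpEpos, (pEeven i).add hDe⟩
      · refine ⟨pO, pOind, pOsub, by rcases pOodd with ⟨r, hr⟩; omega, ?_⟩
        rcases pOodd with ⟨r, hr⟩
        rcases hDo with ⟨q, hq⟩
        exact ⟨r + q + 1, by omega⟩
    obtain ⟨M, hMi, hMs, hMl, hMe⟩ := hchoose
    obtain ⟨a, c, hcyc, hchord, hclen⟩ := hkey M hMi hMs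
    have hEvc : Even c.length := by rw [hclen]; exact hMe
    have h6 : 6 ≤ c.length := by
      rcases hEvc with ⟨r, hr⟩
      omega
    have hIC := heven c.length h6 hEvc
    obtain ⟨emb⟩ := cycle_embedding_of_induced_cycle hcyc hchord
    exact hIC.false emb
  -- generic construction of the middle segment
  have segmaker : ∀ (w0 : V) (X : G.Walk w0 (P.x i.castSucc)), IsInducedPathW X →
      (∀ s ∈ X.support, s ∈ A.support) →
      ∀ (M : G.Walk (P.x i.castSucc) (P.y i)), IsInducedPathW M →
      (∀ s ∈ M.support, s ∈ P.block i) →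
      IsInducedPathW (X.append (M.append Bpre)) ∧
      (∀ s ∈ (X.append (M.append Bpre)).support,
          s ∈ X.support ∨ s ∈ M.support ∨ s ∈ Bpre.support) := by
    intro w0 X hXind hXsub M hMind hMsub
    have d1 : ∀ s ∈ M.support, s ∈ Bpre.support → s = P.y i := fun s hsM hsB =>
      LB_blocki s (hBpre_sub s hsB) (hMsub s hsM)
    have d2 : ∀ s ∈ M.support, ∀ t ∈ Bpre.support, s ≠ P.y i → t ≠ P.y i → ¬ G.Adj s t := by
      intro s hsM t htB hs ht hadj
      rcases LadjB_blocki s (hMsub s hsM) t (hBpre_sub t htB) hadj with h | h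
      · exact hs h
      · exact ht h
    have hMBind : IsInducedPathW (M.append Bpre) := hMind.append hBpre_ind d1 d2
    have d3 : ∀ s ∈ X.support, s ∈ (M.append Bpre).support → s = P.x i.castSucc := by
      intro s hsX hsMB
      rcases mem_support_append.mp hsMB with hsM | hsB
      · exact LA_blocki s (hXsub s hsX) (hMsub s hsM)
      · exact absurd (hBpre_sub s hsB) (fun h => LAB_disj s (hXsub s hsX) h)
    have d4 : ∀ s ∈ X.support, ∀ t ∈ (M.append Bpre).support,
        s ≠ P.x i.castSucc → t ≠ P.x i.castSucc → ¬ G.Adj s t := by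
      intro s hsX t htMB hs ht hadj
      rcases mem_support_append.mp htMB with htM | htB
      · rcases LadjA_blocki s (hXsub s hsX) t (hMsub t htM) hadj with h | h
        · exact hs h
        · exact ht h
      · exact LadjAB s (hXsub s hsX) t (hBpre_sub t htB) hadj
    refine ⟨hXind.append hMBind d3 d4, ?_⟩
    intro s hs
    rcases mem_support_append.mp hs with h | h
    · exact Or.inl h
    · rcases mem_support_append.mp h with h | h
      · exact Or.inr (Or.inl h)
      · exact Or.inr (Or.inr h)
  by_cases hAx : ∃ t ∈ A.support, G.Adj x' t
  · -- Case A : x' has a neighbor on A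
    have hQA : ∃ t ∈ A.reverse.support, G.Adj x' t := by
      obtain ⟨t, ht, hadj⟩ := hAx
      exact ⟨t, by rwa [Walk.support_reverse, List.mem_reverse], hadj⟩
    obtain ⟨z1, q0, r0, hArev, hz1adj, hlastnb⟩ :=
      exists_first_on_walk A.reverse (fun t => G.Adj x' t) hQA
    set Asuf : G.Walk z1 (P.x i.castSucc) := q0.reverse with hAsufdef
    have hAsuf_ind : IsInducedPathW Asuf := by
      have h1 : IsInducedPathW (q0.append r0) := by rw [← hArev]; exact hAind.reverse
      exact h1.of_append_left.reverse
    have hAsuf_sub : ∀ s ∈ Asuf.support, s ∈ A.support := by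
      intro s hs
      rw [hAsufdef, Walk.support_reverse, List.mem_reverse] at hs
      have : s ∈ A.reverse.support := by
        rw [hArev]; exact mem_support_append.mpr (Or.inl hs)
      rwa [Walk.support_reverse, List.mem_reverse] at this
    have hAsuf_only : ∀ t ∈ Asuf.support, G.Adj x' t → t = z1 := by
      intro t ht
      rw [hAsufdef, Walk.support_reverse, List.mem_reverse] at ht
      exact hlastnb t ht
    have hAsuf_len : 1 ≤ Asuf.length := by
      by_contra h; push_neg at h
      have he : z1 = P.x i.castSucc := Walk.eq_of_length_eq_zero (p := Asuf) (by omega)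
      exact hno z1 (he ▸ P.x_mem i) hz1adj
    apply final (Asuf.length + Bpre.length + 2) (by omega)
    intro M hMind hMsub
    obtain ⟨hsegind, hsegsup⟩ := segmaker z1 Asuf hAsuf_ind hAsuf_sub M hMind hMsub
    set seg : G.Walk z1 z2 := Asuf.append (M.append Bpre) with hsegdef
    have hsegP : ∀ s ∈ seg.support, s ∈ P.support := by
      intro s hs
      rcases hsegsup s hs with h | h | h
      · exact hAsubP _ (hAsuf_sub _ h)
      · exact P.mem_support_of_block i (hMsub _ h)
      · exact hBsubP _ (hBpre_sub _ h)
    have hx'nseg : x' ∉ seg.support := fun hs => hx'nP _ (hsegP _ hs) rfl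
    have hnbseg : ∀ t ∈ seg.support, G.Adj x' t → t = z1 ∨ t = z2 := by
      intro t ht hadj
      rcases hsegsup t ht with h | h | h
      · exact Or.inl (hAsuf_only t h hadj)
      · exact absurd hadj (hno t (hMsub t h))
      · exact Or.inr (hfirst t h hadj)
    have hz1ne : z1 ≠ z2 := by
      intro h
      exact LAB_disj z1 (hAsuf_sub _ Asuf.start_mem_support) (h ▸ hz2B)
    obtain ⟨c, hcyc, hchord, hclen⟩ :=
      build_cycle_apex seg hsegind hz1adj hz2adj hx'nseg hnbseg hz1ne
    refine ⟨x', c, hcyc, hchord, ?_⟩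
    rw [hclen, hsegdef]
    simp only [Walk.length_append]
    omega
  · -- Case B : x' has no neighbor on A
    push_neg at hAx
    by_cases hadjxu : G.Adj x' u'
    · -- Case B1
      apply final (A.length + Bpre.length + 3) (by omega)
      intro M hMind hMsub
      obtain ⟨hsegind, hsegsup⟩ := segmaker P.origin A hAind (fun s h => h) M hMind hMsub
      set seg : G.Walk P.origin z2 := A.append (M.append Bpre) with hsegdef
      have hsegP : ∀ s ∈ seg.support, s ∈ P.support := by
        intro s hs
        rcases hsegsup s hs with h | h | h
        · exact hAsubP _ h
        · exact P.mem_support_of_block i (hMsub _ h)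
        · exact hBsubP _ (hBpre_sub _ h)
      have hu'seg : ∀ t ∈ seg.support, G.Adj u' t → t = P.origin := fun t ht hadj =>
        hu'adj_mem t (hsegP t ht) hadj
      have hx'seg : ∀ t ∈ seg.support, G.Adj x' t → t = z2 := by
        intro t ht hadj
        rcases hsegsup t ht with h | h | h
        · exact absurd hadj (hAx t h)
        · exact absurd hadj (hno t (hMsub t h))
        · exact hfirst t h hadj
      set R : G.Walk x' u' := Walk.cons hadjxu Walk.nil with hRdef
      have hRsup : ∀ t, t ∈ R.support ↔ t = x' ∨ t = u' := by
        intro t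
        rw [hRdef]
        simp
      have hRind : IsInducedPathW R := by
        constructor
        · rw [Walk.isPath_def, hRdef]
          simp [hxu]
        · intro a ha b hb hadj
          rw [hRsup] at ha hb
          rw [hRdef]
          simp only [Walk.edges_cons, Walk.edges_nil, List.mem_singleton]
          rcases ha with rfl | rfl <;> rcases hb with rfl | rfl
          · exact absurd hadj (G.loopless.irrefl _)
          · rfl
          · exact Sym2.eq_swap
          · exact absurd hadj (G.loopless.irrefl _)
      have hdisj : ∀ t ∈ R.support, t ∉ seg.support := by
        intro t ht hts
        rw [hRsup] at ht
        rcases ht with rfl | rfl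
        · exact hx'nP _ (hsegP _ hts) rfl
        · exact hu'nP _ (hsegP _ hts) rfl
      have hRseg : ∀ t ∈ R.support, t ≠ x' → t ≠ u' → ∀ s ∈ seg.support, ¬ G.Adj t s := by
        intro t ht htx htu
        rw [hRsup] at ht
        rcases ht with rfl | rfl
        · exact absurd rfl htx
        · exact absurd rfl htu
      obtain ⟨c, hcyc, hchord, hclen⟩ := build_cycle_root seg R hsegind hRind hu'adj
        hz2adj.symm hxu hu'seg hx'seg hRseg hdisj
      refine ⟨u', c, hcyc, hchord, ?_⟩
      rw [hclen, hsegdef, hRdef]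
      simp only [Walk.length_append, Walk.length_cons, Walk.length_nil]
      omega
    · -- Case B2
      have hk2 : 2 ≤ k := by
        by_contra h
        push_neg at h
        have hk1 : k = 1 := by omega
        have hx'v : v = x' := by
          have : G.dist v x' = 0 := by omega
          exact (hx're.dist_eq_zero_iff).mp this
        have hu'v : v = u' := by
          have : G.dist v u' = 0 := by omega
          exact (hu're.dist_eq_zero_iff).mp this
        exact hxu (hx'v ▸ hu'v ▸ rfl)
      set S : Set V := {w | w = x' ∨ w = u' ∨ (G.Reachable v w ∧ G.dist v w + 2 ≤ k)}
        with hSdef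
      have hwalkS : ∀ a : V, G.Reachable v a → G.dist v a = k - 1 →
          ∃ p : G.Walk v a, ∀ s ∈ p.support,
            s = a ∨ (G.Reachable v s ∧ G.dist v s + 2 ≤ k) := by
        intro a hre hdist
        obtain ⟨p, hp⟩ := hre.exists_walk_length_eq_dist
        refine ⟨p, ?_⟩
        intro s hs
        by_cases hsa : s = a
        · exact Or.inl hsa
        · right
          refine ⟨(p.takeUntil s hs).reachable, ?_⟩
          have hsplit := Walk.take_spec p hs
          have hlen : (p.takeUntil s hs).length + (p.dropUntil s hs).length = p.length := by
            have := congrArg Walk.length hsplit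
            rwa [Walk.length_append] at this
          have hdrop : 1 ≤ (p.dropUntil s hs).length := by
            by_contra h; push_neg at h
            exact hsa (Walk.eq_of_length_eq_zero (p := p.dropUntil s hs) (by omega))
          have hd : G.dist v s ≤ (p.takeUntil s hs).length := SimpleGraph.dist_le _
          omega
      obtain ⟨p1, hp1⟩ := hwalkS x' hx're hx'dist
      obtain ⟨p2, hp2⟩ := hwalkS u' hu're hu'dist
      have hR0S : ∀ s ∈ (p1.reverse.append p2).support, s ∈ S := by
        intro s hs
        rcases mem_support_append.mp hs with h | h
        · rw [Walk.support_reverse, List.mem_reverse] at h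
          rcases hp1 s h with rfl | h'
          · exact Or.inl rfl
          · exact Or.inr (Or.inr h')
        · rcases hp2 s h with rfl | h'
          · exact Or.inr (Or.inl rfl)
          · exact Or.inr (Or.inr h')
      obtain ⟨R, hRind, hRS, -⟩ := exists_induced_walk_in (p1.reverse.append p2) hR0S
      have hRlow : ∀ t ∈ R.support, t ≠ x' → t ≠ u' →
          G.Reachable v t ∧ G.dist v t + 2 ≤ k := by
        intro t ht htx htu
        rcases hRS t ht with h | h | h
        · exact absurd h htx
        · exact absurd h htu
        · exact h
      have hRlen : 2 ≤ R.length := by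
        rcases Nat.lt_or_ge R.length 2 with h | h
        · exfalso
          interval_cases h' : R.length
          · exact hxu (Walk.eq_of_length_eq_zero (p := R) h')
          · exact hadjxu (walk_adj_of_length_one h')
        · exact h
      apply final (A.length + Bpre.length + R.length + 2) (by omega)
      intro M hMind hMsub
      obtain ⟨hsegind, hsegsup⟩ := segmaker P.origin A hAind (fun s h => h) M hMind hMsub
      set seg : G.Walk P.origin z2 := A.append (M.append Bpre) with hsegdef
      have hsegP : ∀ s ∈ seg.support, s ∈ P.support := by
        intro s hs
        rcases hsegsup s hs with h | h | h
        · exact hAsubP _ h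
        · exact P.mem_support_of_block i (hMsub _ h)
        · exact hBsubP _ (hBpre_sub _ h)
      have hu'seg : ∀ t ∈ seg.support, G.Adj u' t → t = P.origin := fun t ht hadj =>
        hu'adj_mem t (hsegP t ht) hadj
      have hx'seg : ∀ t ∈ seg.support, G.Adj x' t → t = z2 := by
        intro t ht hadj
        rcases hsegsup t ht with h | h | h
        · exact absurd hadj (hAx t h)
        · exact absurd hadj (hno t (hMsub t h))
        · exact hfirst t h hadj
      have hdisj : ∀ t ∈ R.support, t ∉ seg.support := by
        intro t ht hts
        have hdistk : G.dist v t = k := (hlevP t (hsegP t hts)).2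
        rcases hRS t ht with rfl | rfl | ⟨_, h⟩
        · exact hx'nP _ (hsegP _ hts) rfl
        · exact hu'nP _ (hsegP _ hts) rfl
        · omega
      have hRseg : ∀ t ∈ R.support, t ≠ x' → t ≠ u' → ∀ s ∈ seg.support, ¬ G.Adj t s := by
        intro t ht htx htu s hss hadj
        obtain ⟨hre, hdt⟩ := hRlow t ht htx htu
        have h1 : G.dist v s ≤ G.dist v t + 1 := dist_le_adj hadj hre
        have h2 : G.dist v s = k := (hlevP s (hsegP s hss)).2
        omega
      obtain ⟨c, hcyc, hchord, hclen⟩ := build_cycle_root seg R hsegind hRind hu'adj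
        hz2adj.symm hxu hu'seg hx'seg hRseg hdisj
      refine ⟨u', c, hcyc, hchord, ?_⟩
      rw [hclen, hsegdef]
      simp only [Walk.length_append]
      omega
end

section
/- Let G be a triangle-free graph containing an induced cycle C of length 5, and let S ⊆ V(G) be a minimal dominating set of C that is disjoint from the vertex set of C. In the graph G' obtained from G by deleting all edges with both endpoints in S, for every vertex t ∈ S there exists a vertex t' ∈ S such that G' contains an induced t t'-path of length 4 all of whose internal vertices lie on C, and an induced t t'-path of length 3 or 5 all of whose internal vertices lie on C. -/
open SimpleGraph

lemma induced_path3 {V : Type} {H : SimpleGraph V} {a b c d : V}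
    (h1 : H.Adj a b) (h2 : H.Adj b c) (h3 : H.Adj c d)
    (n1 : ¬H.Adj a c) (n2 : ¬H.Adj a d) (n3 : ¬H.Adj b d) :
    ∃ p : H.Walk a d, IsInducedPathW p ∧ p.support = [a,b,c,d] ∧ p.length = 3 := by
  refine ⟨.cons h1 (.cons h2 (.cons h3 .nil)), ⟨?_, ?_⟩, by simp, by simp⟩
  · have hab := h1.ne
    have hbc := h2.ne
    have hcd := h3.ne
    have hac : a ≠ c := fun h => n2 (h ▸ h3)
    have had : a ≠ d := fun h => n1 (h ▸ h3.symm)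
    have hbd : b ≠ d := fun h => n2 (h ▸ h1)
    simp_all [Walk.isPath_def]
  · intro x hx y hy hxy
    simp only [Walk.support_cons, Walk.support_nil, List.mem_cons, List.mem_singleton,
      List.not_mem_nil, or_false] at hx hy
    simp only [Walk.edges_cons, Walk.edges_nil, List.mem_cons, List.not_mem_nil, or_false]
    rcases hx with rfl | rfl | rfl | rfl <;> rcases hy with rfl | rfl | rfl | rfl <;>
      first
        | exact absurd rfl hxy.ne
        | exact absurd hxy (by assumption)
        | exact absurd hxy.symm (by assumption)
        | simp [Sym2.eq_swap]

lemma induced_path4 {V : Type} {H : SimpleGraph V} {a b c d e : V}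
    (h1 : H.Adj a b) (h2 : H.Adj b c) (h3 : H.Adj c d) (h4 : H.Adj d e)
    (nac : ¬H.Adj a c) (nad : ¬H.Adj a d) (nae : ¬H.Adj a e)
    (nbd : ¬H.Adj b d) (nbe : ¬H.Adj b e) (nce : ¬H.Adj c e) :
    ∃ p : H.Walk a e, IsInducedPathW p ∧ p.support = [a,b,c,d,e] ∧ p.length = 4 := by
  refine ⟨.cons h1 (.cons h2 (.cons h3 (.cons h4 .nil))), ⟨?_, ?_⟩, by simp, by simp⟩
  · have hab := h1.ne
    have hbc := h2.ne
    have hcd := h3.ne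
    have hde := h4.ne
    have hac : a ≠ c := fun h => nad (h ▸ h3)
    have had : a ≠ d := fun h => nae (h ▸ h4)
    have hae : a ≠ e := fun h => nad (h ▸ h4.symm)
    have hbd : b ≠ d := fun h => nbe (h ▸ h4)
    have hbe : b ≠ e := fun h => nae (h ▸ h1)
    have hce : c ≠ e := fun h => nbe (h ▸ h2)
    simp_all [Walk.isPath_def]
  · intro x hx y hy hxy
    simp only [Walk.support_cons, Walk.support_nil, List.mem_cons, List.mem_singleton,
      List.not_mem_nil, or_false] at hx hy
    simp only [Walk.edges_cons, Walk.edges_nil, List.mem_cons, List.not_mem_nil, or_false]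
    rcases hx with rfl | rfl | rfl | rfl | rfl <;> rcases hy with rfl | rfl | rfl | rfl | rfl <;>
      first
        | exact absurd rfl hxy.ne
        | exact absurd hxy (by assumption)
        | exact absurd hxy.symm (by assumption)
        | simp [Sym2.eq_swap]

lemma induced_path5 {V : Type} {H : SimpleGraph V} {a b c d e g : V}
    (h1 : H.Adj a b) (h2 : H.Adj b c) (h3 : H.Adj c d) (h4 : H.Adj d e) (h5 : H.Adj e g)
    (nac : ¬H.Adj a c) (nad : ¬H.Adj a d) (nae : ¬H.Adj a e) (nag : ¬H.Adj a g)
    (nbd : ¬H.Adj b d) (nbe : ¬H.Adj b e) (nbg : ¬H.Adj b g)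
    (nce : ¬H.Adj c e) (ncg : ¬H.Adj c g) (ndg : ¬H.Adj d g) :
    ∃ p : H.Walk a g, IsInducedPathW p ∧ p.support = [a,b,c,d,e,g] ∧ p.length = 5 := by
  refine ⟨.cons h1 (.cons h2 (.cons h3 (.cons h4 (.cons h5 .nil)))), ⟨?_, ?_⟩, by simp, by simp⟩
  · have hab := h1.ne
    have hbc := h2.ne
    have hcd := h3.ne
    have hde := h4.ne
    have heg := h5.ne
    have hac : a ≠ c := fun h => nad (h ▸ h3)
    have had : a ≠ d := fun h => nae (h ▸ h4)
    have hae : a ≠ e := fun h => nag (h ▸ h5)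
    have hag : a ≠ g := fun h => nae (h ▸ h5.symm)
    have hbd : b ≠ d := fun h => nbe (h ▸ h4)
    have hbe : b ≠ e := fun h => nbg (h ▸ h5)
    have hbg : b ≠ g := fun h => nag (h ▸ h1)
    have hce : c ≠ e := fun h => ncg (h ▸ h5)
    have hcg : c ≠ g := fun h => nbg (h ▸ h2)
    have hdg : d ≠ g := fun h => ncg (h ▸ h3)
    simp_all [Walk.isPath_def]
  · intro x hx y hy hxy
    simp only [Walk.support_cons, Walk.support_nil, List.mem_cons, List.mem_singleton,
      List.not_mem_nil, or_false] at hx hy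
    simp only [Walk.edges_cons, Walk.edges_nil, List.mem_cons, List.not_mem_nil, or_false]
    rcases hx with rfl | rfl | rfl | rfl | rfl | rfl <;>
      rcases hy with rfl | rfl | rfl | rfl | rfl | rfl <;>
      first
        | exact absurd rfl hxy.ne
        | exact absurd hxy (by assumption)
        | exact absurd hxy.symm (by assumption)
        | simp [Sym2.eq_swap]

/-- Let `G` be triangle-free with an induced 5-cycle `C` (given by the
embedding `f`), and let `S` be a minimal dominating set of `C` disjoint from `C`. In the
graph obtained by deleting all edges with both endpoints in `S`, for every `t ∈ S` there
is `t' ∈ S` with an induced `t t'`-path of length 4 and an induced `t t'`-path of length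
3 or 5, both with all internal vertices on `C`. -/
theorem dominating_set_parity_paths (V : Type) (G : SimpleGraph V)
    (h3 : G.CliqueFree 3) (f : cycleGraph 5 ↪g G) (S : Set V)
    (hdisj : ∀ s ∈ S, s ∉ Set.range fun i => f i)
    (hdom : ∀ u ∈ Set.range (fun i => f i), ∃ s ∈ S, G.Adj s u)
    (hmin : ∀ S' ⊂ S, ∃ u ∈ Set.range (fun i => f i), ∀ s ∈ S', ¬ G.Adj s u) :
    ∀ t ∈ S, ∃ t' ∈ S,
      (∃ p : (G.deleteEdges {e : Sym2 V | ∃ a ∈ S, ∃ b ∈ S, e = s(a, b)}).Walk t t',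
        IsInducedPathW p ∧
        (∀ w ∈ p.support, w = t ∨ w = t' ∨ w ∈ Set.range fun i => f i) ∧
        p.length = 4) ∧
      (∃ q : (G.deleteEdges {e : Sym2 V | ∃ a ∈ S, ∃ b ∈ S, e = s(a, b)}).Walk t t',
        IsInducedPathW q ∧
        (∀ w ∈ q.support, w = t ∨ w = t' ∨ w ∈ Set.range fun i => f i) ∧
        (q.length = 3 ∨ q.length = 5)) := by
  intro t ht
  set E : Set (Sym2 V) := {e : Sym2 V | ∃ a ∈ S, ∃ b ∈ S, e = s(a, b)} with hE
  set G' := G.deleteEdges E with hG'def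
  -- adjacency in G'
  have hG' : ∀ x y : V, G'.Adj x y ↔ G.Adj x y ∧ ¬(x ∈ S ∧ y ∈ S) := by
    intro x y
    rw [hG'def, deleteEdges_adj]
    constructor
    · rintro ⟨h, hn⟩
      refine ⟨h, fun ⟨hx, hy⟩ => hn ⟨x, hx, y, hy, rfl⟩⟩
    · rintro ⟨h, hn⟩
      refine ⟨h, ?_⟩
      rintro ⟨a, haS, b, hbS, hab⟩
      rw [Sym2.eq_iff] at hab
      rcases hab with ⟨rfl, rfl⟩ | ⟨rfl, rfl⟩
      · exact hn ⟨haS, hbS⟩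
      · exact hn ⟨hbS, haS⟩
  have adj' : ∀ x y : V, G.Adj x y → y ∉ S → G'.Adj x y := fun x y h hy =>
    (hG' x y).2 ⟨h, fun hp => hy hp.2⟩
  have nadj' : ∀ x y : V, ¬G.Adj x y → ¬G'.Adj x y := fun x y h h' =>
    h ((hG' x y).1 h').1
  have nadjS : ∀ x ∈ S, ∀ y ∈ S, ¬G'.Adj x y := fun x hx y hy h' =>
    ((hG' x y).1 h').2 ⟨hx, hy⟩
  -- triangle-free helper
  have tri : ∀ {x y z : V}, G.Adj x y → G.Adj x z → G.Adj y z → False := by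
    classical
    intro x y z hxy hxz hyz
    exact h3 {x, y, z} (is3Clique_triple_iff.2 ⟨hxy, hxz, hyz⟩)
  -- private vertex of t
  obtain ⟨u, ⟨j, rfl⟩, hu⟩ := hmin (S \ {t}) (Set.diff_singleton_ssubset.2 ht)
  -- the rotated cycle
  set c : Fin 5 → V := fun i => f (j + i) with hc
  have hcrange : ∀ i : Fin 5, c i ∈ Set.range fun i => f i := fun i => ⟨j + i, rfl⟩
  have hadjc : ∀ i k : Fin 5, G.Adj (c i) (c k) ↔ (cycleGraph 5).Adj i k := by
    intro i k
    rw [hc]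
    simp only
    rw [f.map_adj_iff, cycleGraph_adj, cycleGraph_adj, add_sub_add_left_eq_sub]
    rw [show j + k - (j + i) = k - i by rw [add_sub_add_left_eq_sub]]
  have hnc : ∀ i : Fin 5, c i ∉ S := fun i h => hdisj _ h (hcrange i)
  have priv : ∀ s ∈ S, s ≠ t → ¬G.Adj s (c 0) := by
    intro s hs hst hadj
    exact hu s ⟨hs, hst⟩ (by simpa [hc] using hadj)
  -- t is adjacent to c 0
  obtain ⟨s0, hs0S, hs0adj⟩ := hdom (f j) ⟨j, rfl⟩
  have hs0t : s0 = t := by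
    by_contra h
    exact hu s0 ⟨hs0S, h⟩ hs0adj
  rw [hs0t] at hs0adj
  have htc0 : G.Adj t (c 0) := by
    simpa [hc] using hs0adj
  -- cycle edges and non-edges
  have e01 : G.Adj (c 0) (c 1) := (hadjc 0 1).2 (by decide)
  have e12 : G.Adj (c 1) (c 2) := (hadjc 1 2).2 (by decide)
  have e23 : G.Adj (c 2) (c 3) := (hadjc 2 3).2 (by decide)
  have e34 : G.Adj (c 3) (c 4) := (hadjc 3 4).2 (by decide)
  have e40 : G.Adj (c 4) (c 0) := (hadjc 4 0).2 (by decide)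
  have n02 : ¬G.Adj (c 0) (c 2) := fun h => absurd ((hadjc 0 2).1 h) (by decide)
  have n03 : ¬G.Adj (c 0) (c 3) := fun h => absurd ((hadjc 0 3).1 h) (by decide)
  have n42 : ¬G.Adj (c 4) (c 2) := fun h => absurd ((hadjc 4 2).1 h) (by decide)
  -- facts about t
  have nP1 : ¬G.Adj t (c 1) := fun h => tri htc0 h e01
  have nP4 : ¬G.Adj t (c 4) := fun h => tri h htc0 e40
  by_cases hP2 : G.Adj t (c 2)
  · -- Case B: t adjacent to c 0 and c 2; use a dominator of c 3
    have nP3 : ¬G.Adj t (c 3) := fun h => tri hP2 h e23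
    obtain ⟨t', ht'S, ht'3⟩ := hdom (c 3) (hcrange 3)
    have ht'ne : t' ≠ t := fun h => nP3 (h ▸ ht'3)
    have nt'0 : ¬G.Adj t' (c 0) := priv t' ht'S ht'ne
    have nt'2 : ¬G.Adj t' (c 2) := fun h => tri h ht'3 e23
    have nt'4 : ¬G.Adj t' (c 4) := fun h => tri ht'3 h e34
    refine ⟨t', ht'S, ?_, ?_⟩
    · -- 4-path : t, c0, c4, c3, t'
      obtain ⟨p, hind, hsup, hlen⟩ := induced_path4 (H := G')
        (adj' t (c 0) htc0 (hnc 0)) (adj' _ _ e40.symm (hnc 4))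
        (adj' _ _ e34.symm (hnc 3)) ((hG' _ _).2 ⟨ht'3.symm, fun hp => hnc 3 hp.1⟩)
        (nadj' _ _ nP4) (nadj' _ _ nP3) (nadjS t ht t' ht'S)
        (nadj' _ _ n03) (nadj' _ _ fun h => nt'0 h.symm)
        (nadj' _ _ fun h => nt'4 h.symm)
      refine ⟨p, hind, fun w hw => ?_, hlen⟩
      rw [hsup] at hw
      simp only [List.mem_cons, List.mem_singleton, List.not_mem_nil, or_false] at hw
      rcases hw with rfl | rfl | rfl | rfl | rfl
      · exact Or.inl rfl
      · exact Or.inr (Or.inr (hcrange 0))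
      · exact Or.inr (Or.inr (hcrange 4))
      · exact Or.inr (Or.inr (hcrange 3))
      · exact Or.inr (Or.inl rfl)
    · -- 3-path : t, c2, c3, t'
      obtain ⟨q, hind, hsup, hlen⟩ := induced_path3 (H := G')
        (adj' t (c 2) hP2 (hnc 2)) (adj' _ _ e23 (hnc 3))
        ((hG' _ _).2 ⟨ht'3.symm, fun hp => hnc 3 hp.1⟩)
        (nadj' _ _ nP3) (nadjS t ht t' ht'S) (nadj' _ _ fun h => nt'2 h.symm)
      refine ⟨q, hind, fun w hw => ?_, Or.inl hlen⟩
      rw [hsup] at hw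
      simp only [List.mem_cons, List.mem_singleton, List.not_mem_nil, or_false] at hw
      rcases hw with rfl | rfl | rfl | rfl
      · exact Or.inl rfl
      · exact Or.inr (Or.inr (hcrange 2))
      · exact Or.inr (Or.inr (hcrange 3))
      · exact Or.inr (Or.inl rfl)
  · -- Cases A and B': t not adjacent to c 2; use a dominator of c 2
    obtain ⟨t', ht'S, ht'2⟩ := hdom (c 2) (hcrange 2)
    have ht'ne : t' ≠ t := fun h => hP2 (h ▸ ht'2)
    have nt'0 : ¬G.Adj t' (c 0) := priv t' ht'S ht'ne
    have nt'1 : ¬G.Adj t' (c 1) := fun h => tri h ht'2 e12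
    have nt'3 : ¬G.Adj t' (c 3) := fun h => tri ht'2 h e23
    refine ⟨t', ht'S, ?_, ?_⟩
    · -- 4-path : t, c0, c1, c2, t'
      obtain ⟨p, hind, hsup, hlen⟩ := induced_path4 (H := G')
        (adj' t (c 0) htc0 (hnc 0)) (adj' _ _ e01 (hnc 1))
        (adj' _ _ e12 (hnc 2)) ((hG' _ _).2 ⟨ht'2.symm, fun hp => hnc 2 hp.1⟩)
        (nadj' _ _ nP1) (nadj' _ _ hP2) (nadjS t ht t' ht'S)
        (nadj' _ _ n02) (nadj' _ _ fun h => nt'0 h.symm)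
        (nadj' _ _ fun h => nt'1 h.symm)
      refine ⟨p, hind, fun w hw => ?_, hlen⟩
      rw [hsup] at hw
      simp only [List.mem_cons, List.mem_singleton, List.not_mem_nil, or_false] at hw
      rcases hw with rfl | rfl | rfl | rfl | rfl
      · exact Or.inl rfl
      · exact Or.inr (Or.inr (hcrange 0))
      · exact Or.inr (Or.inr (hcrange 1))
      · exact Or.inr (Or.inr (hcrange 2))
      · exact Or.inr (Or.inl rfl)
    · by_cases hP3 : G.Adj t (c 3)
      · -- 3-path : t, c3, c2, t'
        obtain ⟨q, hind, hsup, hlen⟩ := induced_path3 (H := G')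
          (adj' t (c 3) hP3 (hnc 3)) (adj' _ _ e23.symm (hnc 2))
          ((hG' _ _).2 ⟨ht'2.symm, fun hp => hnc 2 hp.1⟩)
          (nadj' _ _ hP2) (nadjS t ht t' ht'S) (nadj' _ _ fun h => nt'3 h.symm)
        refine ⟨q, hind, fun w hw => ?_, Or.inl hlen⟩
        rw [hsup] at hw
        simp only [List.mem_cons, List.mem_singleton, List.not_mem_nil, or_false] at hw
        rcases hw with rfl | rfl | rfl | rfl
        · exact Or.inl rfl
        · exact Or.inr (Or.inr (hcrange 3))
        · exact Or.inr (Or.inr (hcrange 2))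
        · exact Or.inr (Or.inl rfl)
      · by_cases ht'4 : G.Adj t' (c 4)
        · -- 3-path : t, c0, c4, t'
          obtain ⟨q, hind, hsup, hlen⟩ := induced_path3 (H := G')
            (adj' t (c 0) htc0 (hnc 0)) (adj' _ _ e40.symm (hnc 4))
            ((hG' _ _).2 ⟨ht'4.symm, fun hp => hnc 4 hp.1⟩)
            (nadj' _ _ nP4) (nadjS t ht t' ht'S) (nadj' _ _ fun h => nt'0 h.symm)
          refine ⟨q, hind, fun w hw => ?_, Or.inl hlen⟩
          rw [hsup] at hw
          simp only [List.mem_cons, List.mem_singleton, List.not_mem_nil, or_false] at hw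
          rcases hw with rfl | rfl | rfl | rfl
          · exact Or.inl rfl
          · exact Or.inr (Or.inr (hcrange 0))
          · exact Or.inr (Or.inr (hcrange 4))
          · exact Or.inr (Or.inl rfl)
        · -- 5-path : t, c0, c4, c3, c2, t'
          obtain ⟨q, hind, hsup, hlen⟩ := induced_path5 (H := G')
            (adj' t (c 0) htc0 (hnc 0)) (adj' _ _ e40.symm (hnc 4))
            (adj' _ _ e34.symm (hnc 3)) (adj' _ _ e23.symm (hnc 2))
            ((hG' _ _).2 ⟨ht'2.symm, fun hp => hnc 2 hp.1⟩)
            (nadj' _ _ nP4) (nadj' _ _ hP3) (nadj' _ _ hP2)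
            (nadjS t ht t' ht'S) (nadj' _ _ n03) (nadj' _ _ n02)
            (nadj' _ _ fun h => nt'0 h.symm) (nadj' _ _ n42)
            (nadj' _ _ fun h => ht'4 h.symm) (nadj' _ _ fun h => nt'3 h.symm)
          refine ⟨q, hind, fun w hw => ?_, Or.inr hlen⟩
          rw [hsup] at hw
          simp only [List.mem_cons, List.mem_singleton, List.not_mem_nil, or_false] at hw
          rcases hw with rfl | rfl | rfl | rfl | rfl | rfl
          · exact Or.inl rfl
          · exact Or.inr (Or.inr (hcrange 0))
          · exact Or.inr (Or.inr (hcrange 4))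
          · exact Or.inr (Or.inr (hcrange 3))
          · exact Or.inr (Or.inr (hcrange 2))
          · exact Or.inr (Or.inl rfl)
end

section
/- Suppose c' is a positive integer such that every graph containing no triangle, no induced cycle of length 5, and no induced cycle of even length at least 6 has chromatic number less than c'. Let G be a graph containing no triangle and no induced cycle of even length at least 6, let v be a vertex of G and (N_0, N_1, …) be the v-levelling. For every k ≥ 1, if S ⊆ N_{k−1} is a stable set, then χ(N(S) ∩ N_k) ≤ 2c'. -/
open SimpleGraph

namespace SSBG

variable {V : Type} {G : SimpleGraph V}


variable {V : Type} {G : SimpleGraph V}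

lemma my_dist_adj_le {v x y : V} (h : G.Reachable v x) (hadj : G.Adj x y) :
    G.dist v y ≤ G.dist v x + 1 := by
  obtain ⟨p, hp⟩ := h.exists_walk_length_eq_dist
  calc G.dist v y ≤ (p.concat hadj).length := dist_le _
    _ = G.dist v x + 1 := by rw [SimpleGraph.Walk.length_concat, hp]

lemma fin_sub_one_iff {m : ℕ} (i j : Fin (m + 3)) :
    (j - i) = 1 ↔ j.val = (i.val + 1) % (m + 3) := by
  rw [sub_eq_iff_eq_add']
  constructor
  · intro h; rw [h, Fin.add_def, Fin.val_one]
  · intro h; exact Fin.ext (by rw [Fin.add_def, Fin.val_one]; exact h)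

lemma embed_cycle {n : ℕ} (hn : 3 ≤ n) (F : ℕ → V)
    (hinj : ∀ i < n, ∀ j < n, F i = F j → i = j)
    (hadj : ∀ i < n, G.Adj (F i) (F ((i+1) % n)))
    (hnon : ∀ i < n, ∀ j < n, j ≠ (i+1) % n → i ≠ (j+1) % n → i ≠ j → ¬ G.Adj (F i) (F j)) :
    Nonempty (cycleGraph n ↪g G) := by
  obtain ⟨m, rfl⟩ : ∃ m, n = m + 3 := ⟨n - 3, by omega⟩
  refine ⟨⟨⟨fun i => F i.val, ?_⟩, ?_⟩⟩
  · intro i j h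
    exact Fin.ext (hinj i.val i.isLt j.val j.isLt h)
  · intro i j
    show G.Adj (F i.val) (F j.val) ↔ _
    have hadj2 := @cycleGraph_adj (m + 1) i j
    rw [hadj2, fin_sub_one_iff, fin_sub_one_iff]
    constructor
    · intro h
      by_contra hc
      push_neg at hc
      have h1 : i.val ≠ (j.val + 1) % (m+3) := hc.1
      have h2 : j.val ≠ (i.val + 1) % (m+3) := hc.2
      refine hnon i.val i.isLt j.val j.isLt h2 h1 ?_ h
      intro hh
      exact (G.ne_of_adj h) (by rw [hh])
    · rintro (h | h)
      · have := hadj j.val j.isLt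
        rw [← h] at this
        exact this.symm
      · have := hadj i.val i.isLt
        rw [← h] at this
        exact this

lemma glue (e g : ℕ → V) (ℓ q : ℕ) (hl : 3 ≤ ℓ) (hq : 2 ≤ q)
    (h0 : e 0 = g 0) (h1 : e ℓ = g q)
    (eadj : ∀ i < ℓ, G.Adj (e i) (e (i+1)))
    (enon : ∀ i j, i ≤ ℓ → j ≤ ℓ → i + 1 < j → ¬ G.Adj (e i) (e j))
    (einj : ∀ i j, i ≤ ℓ → j ≤ ℓ → i < j → e i ≠ e j)
    (gadj : ∀ i < q, G.Adj (g i) (g (i+1)))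
    (gnon : ∀ i j, i ≤ q → j ≤ q → i + 1 < j → ¬ G.Adj (g i) (g j))
    (ginj : ∀ i j, i ≤ q → j ≤ q → i < j → g i ≠ g j)
    (cross : ∀ i j, 0 < i → i < ℓ → 0 < j → j < q → ¬ G.Adj (e i) (g j) ∧ e i ≠ g j) :
    Nonempty (cycleGraph (ℓ + q) ↪g G) := by
  set n := ℓ + q with hn
  have hgnonsymm : ∀ i j, i ≤ q → j ≤ q → i + 1 < j → ¬ G.Adj (g j) (g i) := by
    intro i j hi hj hij hadj; exact gnon i j hi hj hij hadj.symm
  refine embed_cycle (by omega) (fun m => if m ≤ ℓ then e m else g (n - m)) ?_ ?_ ?_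
  · -- injectivity
    intro i hi j hj hF
    by_cases hie : i ≤ ℓ <;> by_cases hje : j ≤ ℓ <;>
      simp only [hie, hje, if_pos, if_neg, if_true, if_false] at hF
    · rcases Nat.lt_trichotomy i j with h | h | h
      · exact absurd hF (einj i j hie hje h)
      · exact h
      · exact absurd hF.symm (einj j i hje hie h)
    · -- i ≤ ℓ < j : e i = g (n - j), n - j ∈ [1, q-1]
      exfalso
      rcases Nat.eq_zero_or_pos i with rfl | hipos
      · rw [h0] at hF
        exact ginj 0 (n - j) (by omega) (by omega) (by omega) hF
      · rcases Nat.lt_or_ge i ℓ with hilt | hieq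
        · exact (cross i (n - j) hipos hilt (by omega) (by omega)).2 hF
        · have : i = ℓ := by omega
          subst this
          rw [h1] at hF
          exact ginj (n - j) q (by omega) le_rfl (by omega) hF.symm
    · exfalso
      rcases Nat.eq_zero_or_pos j with rfl | hjpos
      · rw [h0] at hF
        exact ginj 0 (n - i) (by omega) (by omega) (by omega) hF.symm
      · rcases Nat.lt_or_ge j ℓ with hjlt | hjeq
        · exact (cross j (n - i) hjpos hjlt (by omega) (by omega)).2 hF.symm
        · have : j = ℓ := by omega
          subst this
          rw [h1] at hF
          exact ginj (n - i) q (by omega) le_rfl (by omega) hF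
    · -- both > ℓ
      rcases Nat.lt_trichotomy (n - i) (n - j) with h | h | h
      · exact absurd hF (ginj _ _ (by omega) (by omega) h)
      · omega
      · exact absurd hF.symm (ginj _ _ (by omega) (by omega) h)
  · -- adjacency
    intro i hi
    rcases Nat.lt_or_ge i ℓ with h | h
    · have hmod : (i + 1) % n = i + 1 := Nat.mod_eq_of_lt (by omega)
      rw [hmod]
      simp only [if_pos (by omega : i ≤ ℓ), if_pos (by omega : i + 1 ≤ ℓ)]
      exact eadj i h
    · rcases Nat.eq_or_lt_of_le h with heq | hgt
      · -- i = ℓ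
        have hil : i = ℓ := heq.symm
        have hmod : (i + 1) % n = i + 1 := Nat.mod_eq_of_lt (by omega)
        rw [hmod]
        simp only [if_pos (by omega : i ≤ ℓ), if_neg (by omega : ¬ i + 1 ≤ ℓ)]
        have he' : e i = g q := by rw [hil]; exact h1
        rw [he']
        have hni : n - (i + 1) = q - 1 := by omega
        rw [hni]
        have hgq := gadj (q-1) (by omega)
        have hq1 : q - 1 + 1 = q := by omega
        rw [hq1] at hgq
        exact hgq.symm
    -- ℓ < i
      · rcases Nat.lt_or_ge (i+1) n with hlt | hge
        · have hmod : (i + 1) % n = i + 1 := Nat.mod_eq_of_lt hlt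
          rw [hmod]
          simp only [if_neg (by omega : ¬ i ≤ ℓ), if_neg (by omega : ¬ i + 1 ≤ ℓ)]
          have := gadj (n - i - 1) (by omega)
          have h2 : n - i - 1 + 1 = n - i := by omega
          rw [h2] at this
          have h3 : n - (i+1) = n - i - 1 := by omega
          rw [h3]
          exact this.symm
        · -- i = n - 1
          have : i = n - 1 := by omega
          subst this
          have hmod : (n - 1 + 1) % n = 0 := by
            have : n - 1 + 1 = n := by omega
            rw [this, Nat.mod_self]
          rw [hmod]
          simp only [if_neg (by omega : ¬ n - 1 ≤ ℓ), if_pos (by omega : 0 ≤ ℓ)]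
          rw [h0]
          have : n - (n-1) = 1 := by omega
          rw [this]
          exact (gadj 0 (by omega)).symm
  · -- non-adjacency
    intro i hi j hj hj1 hi1 hij
    have hne1 : j ≠ i + 1 ∨ i + 1 ≥ n := by
      rcases Nat.lt_or_ge (i+1) n with h | h
      · left; rwa [Nat.mod_eq_of_lt h] at hj1
      · right; exact h
    have hne2 : i ≠ j + 1 ∨ j + 1 ≥ n := by
      rcases Nat.lt_or_ge (j+1) n with h | h
      · left; rwa [Nat.mod_eq_of_lt h] at hi1
      · right; exact h
    -- translate wrap-around conditions
    have hmod0 : (n - 1 + 1) % n = 0 := by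
      have h' : n - 1 + 1 = n := by omega
      rw [h', Nat.mod_self]
    have hw1 : i = n - 1 → j ≠ 0 := by
      intro he; subst he
      rw [hmod0] at hj1; exact hj1
    have hw2 : j = n - 1 → i ≠ 0 := by
      intro he; subst he
      rw [hmod0] at hi1; exact hi1
    by_cases hie : i ≤ ℓ <;> by_cases hje : j ≤ ℓ <;>
      simp only [hie, hje, if_pos, if_neg, if_true, if_false]
    · -- both in P
      rcases Nat.lt_trichotomy i j with h | h | h
      · refine enon i j hie hje ?_
        omega
      · exact absurd h hij
      · intro hadj; refine enon j i hje hie (by omega) hadj.symm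
    · -- i ≤ ℓ < j: cases i = 0, i = ℓ, interior
      rcases Nat.eq_zero_or_pos i with rfl | hipos
      · rw [h0]
        have hj0 : j ≠ n - 1 := fun hh => (hw2 hh) rfl
        exact gnon 0 (n - j) (by omega) (by omega) (by omega)
      · rcases Nat.lt_or_ge i ℓ with hilt | hieq
        · exact (cross i (n - j) hipos hilt (by omega) (by omega)).1
        · have hiq : i = ℓ := by omega
          subst hiq
          rw [h1]
          have hj1' : j ≠ i + 1 := by
            rcases hne1 with h | h
            · exact h
            · omega
          exact hgnonsymm (n - j) q (by omega) le_rfl (by omega)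
    · rcases Nat.eq_zero_or_pos j with rfl | hjpos
      · rw [h0]
        have hi0 : i ≠ n - 1 := fun hh => (hw1 hh) rfl
        exact hgnonsymm 0 (n - i) (by omega) (by omega) (by omega)
      · rcases Nat.lt_or_ge j ℓ with hjlt | hjeq
        · intro hadj
          exact (cross j (n - i) hjpos hjlt (by omega) (by omega)).1 hadj.symm
        · have hjq : j = ℓ := by omega
          subst hjq
          rw [h1]
          have hi1' : i ≠ j + 1 := by
            rcases hne2 with h | h
            · exact h
            · omega
          exact gnon (n - i) q (by omega) le_rfl (by omega)
    · -- both > ℓ : a = n - i, b = n - j ∈ [1, q-1]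
      have hab : n - i ≠ n - j := by omega
      have h1' : n - j ≠ n - i + 1 := by
        intro hh
        -- n - j = n - i + 1 ↔ i = j + 1  (both < n)
        have : i = j + 1 := by omega
        rcases hne2 with h | h
        · exact h this
        · omega
      have h2' : n - i ≠ n - j + 1 := by
        intro hh
        have : j = i + 1 := by omega
        rcases hne1 with h | h
        · exact h this
        · omega
      rcases Nat.lt_trichotomy (n - i) (n - j) with h | h | h
      · exact gnon (n - i) (n - j) (by omega) (by omega) (by omega)
      · omega
      · exact hgnonsymm (n - j) (n - i) (by omega) (by omega) (by omega)

lemma getVert_inj {u w : V} (p : G.Walk u w) (hp : p.IsPath) :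
    ∀ i, i ≤ p.length → ∀ j, j ≤ p.length → p.getVert i = p.getVert j → i = j := by
  induction p with
  | nil => intro i hi j hj _; simp only [Walk.length_nil, Nat.le_zero] at hi hj; omega
  | @cons a b c h q ih =>
    rw [Walk.cons_isPath_iff] at hp
    intro i hi j hj heq
    match i, j with
    | 0, 0 => rfl
    | 0, (m+1) =>
      exfalso
      apply hp.2
      rw [Walk.mem_support_iff_exists_getVert]
      refine ⟨m, ?_, ?_⟩
      · rw [← Walk.getVert_cons_succ q h]; exact heq.symm
      · simpa using hj
    | (m+1), 0 =>
      exfalso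
      apply hp.2
      rw [Walk.mem_support_iff_exists_getVert]
      refine ⟨m, ?_, ?_⟩
      · rw [← Walk.getVert_cons_succ q h]; exact heq
      · simpa using hi
    | (m+1), (l+1) =>
      have := ih hp.1 m (by simpa using hi) l (by simpa using hj)
        (by rwa [← Walk.getVert_cons_succ q h, ← Walk.getVert_cons_succ q h])
      omega

lemma length_takeUntil_eq [DecidableEq V] {u w x : V} (p : G.Walk u w) (hx : x ∈ p.support) (hp : p.IsPath)
    {i : ℕ} (hi : i ≤ p.length) (hgv : p.getVert i = x) :
    (p.takeUntil x hx).length = i := by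
  have hsp := p.take_spec hx
  have hlen : (p.takeUntil x hx).length + (p.dropUntil x hx).length = p.length := by
    rw [← Walk.length_append, hsp]
  have hgv2 : p.getVert (p.takeUntil x hx).length = x := by
    have h2 := Walk.getVert_append (p.takeUntil x hx) (p.dropUntil x hx)
      (p.takeUntil x hx).length
    rw [hsp] at h2
    simpa using h2
  exact getVert_inj p hp _ (by omega) i hi (by rw [hgv2, hgv])

lemma Qexists {v s s' : V} {k : ℕ} (hk : 2 ≤ k)
    (hs : G.Reachable v s) (hds : G.dist v s + 1 = k)
    (hs' : G.Reachable v s') (hds' : G.dist v s' + 1 = k)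
    (hne : s ≠ s') (hnadj : ¬ G.Adj s s') :
    ∃ (q : ℕ) (g : ℕ → V), 2 ≤ q ∧ g 0 = s ∧ g q = s' ∧
      (∀ i < q, G.Adj (g i) (g (i+1))) ∧
      (∀ i, i ≤ q → ∀ j, j ≤ q → g i = g j → i = j) ∧
      (∀ i j, i ≤ q → j ≤ q → i + 1 < j → ¬ G.Adj (g i) (g j)) ∧
      (∀ i, 0 < i → i < q → G.Reachable v (g i) ∧ G.dist v (g i) + 2 ≤ k) := by
  classical
  obtain ⟨p1, hp1⟩ := hs.exists_walk_length_eq_dist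
  obtain ⟨p2, hp2⟩ := hs'.exists_walk_length_eq_dist
  have claim : ∀ (t : V) (pp : G.Walk v t), pp.length + 1 = k →
      ∀ x ∈ pp.support, x = t ∨ (G.Reachable v x ∧ G.dist v x + 2 ≤ k) := by
    intro t pp hlen x hx
    by_cases hxt : x = t
    · exact Or.inl hxt
    · right
      refine ⟨⟨pp.takeUntil x hx⟩, ?_⟩
      have h1 : (pp.takeUntil x hx).length + (pp.dropUntil x hx).length = pp.length := by
        rw [← Walk.length_append, pp.take_spec hx]
      have h2 : (pp.dropUntil x hx).length ≠ 0 := by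
        intro h0
        exact hxt ((pp.dropUntil x hx).eq_of_length_eq_zero h0)
      have h3 := dist_le (pp.takeUntil x hx)
      omega
  have hP : ∃ n, ∃ pp : G.Walk s s',
      (∀ x ∈ pp.support, x = s ∨ x = s' ∨ (G.Reachable v x ∧ G.dist v x + 2 ≤ k)) ∧
      pp.IsPath ∧ pp.length = n := by
    refine ⟨_, (p1.reverse.append p2).bypass, ?_, Walk.bypass_isPath _, rfl⟩
    intro x hx
    have hx2 := Walk.support_bypass_subset _ hx
    rw [Walk.support_append] at hx2
    rcases List.mem_append.mp hx2 with h | h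
    · rw [Walk.support_reverse] at h
      have h := List.mem_reverse.mp h
      rcases claim s p1 (by omega) x h with h' | h'
      · exact Or.inl h'
      · exact Or.inr (Or.inr h')
    · have h := List.mem_of_mem_tail h
      rcases claim s' p2 (by omega) x h with h' | h'
      · exact Or.inr (Or.inl h')
      · exact Or.inr (Or.inr h')
  obtain ⟨p, hLwp, hpath, hlen⟩ := Nat.find_spec hP
  set q := Nat.find hP with hq
  have hmin : ∀ m, m < q → ¬ ∃ pp : G.Walk s s',
      (∀ x ∈ pp.support, x = s ∨ x = s' ∨ (G.Reachable v x ∧ G.dist v x + 2 ≤ k)) ∧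
      pp.IsPath ∧ pp.length = m := fun m hm => Nat.find_min hP hm
  have hginj := getVert_inj p hpath
  have hq2 : 2 ≤ q := by
    rcases Nat.lt_or_ge q 2 with h | h
    · exfalso
      interval_cases q
      · exact hne (p.eq_of_length_eq_zero hlen)
      · have hadj := p.adj_getVert_succ (i := 0) (by omega)
        rw [Walk.getVert_zero] at hadj
        have h1 : p.getVert 1 = s' := by
          have := p.getVert_length
          rwa [hlen] at this
        rw [h1] at hadj
        exact hnadj hadj
    · exact h
  refine ⟨q, p.getVert, hq2, p.getVert_zero, ?_, ?_, ?_, ?_, ?_⟩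
  · rw [← hlen]; exact p.getVert_length
  · intro i hi; exact p.adj_getVert_succ (by omega)
  · intro i hi j hj heq; exact hginj i (by omega) j (by omega) heq
  · -- non-adjacency by minimality
    intro i j hi hj hij
    by_contra hadj
    have hxi : p.getVert i ∈ p.support :=
      Walk.mem_support_iff_exists_getVert.mpr ⟨i, rfl, by omega⟩
    have hxj : p.getVert j ∈ p.support :=
      Walk.mem_support_iff_exists_getVert.mpr ⟨j, rfl, by omega⟩
    have ht1 : (p.takeUntil _ hxi).length = i :=
      length_takeUntil_eq p hxi hpath (by omega) rfl
    have ht2 : (p.takeUntil _ hxj).length = j :=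
      length_takeUntil_eq p hxj hpath (by omega) rfl
    have hsum : (p.takeUntil _ hxj).length + (p.dropUntil _ hxj).length = p.length := by
      rw [← Walk.length_append, p.take_spec hxj]
    set p' := (p.takeUntil _ hxi).append (Walk.cons hadj (p.dropUntil _ hxj)) with hp'
    have hlen' : p'.length < p.length := by
      rw [hp', Walk.length_append, Walk.length_cons]
      omega
    have hsub : ∀ x ∈ p'.support, x ∈ p.support := by
      intro x hx
      rw [hp', Walk.support_append] at hx
      rcases List.mem_append.mp hx with h | h
      · exact Walk.support_takeUntil_subset p hxi h
      · have h2 := List.mem_of_mem_tail h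
        rw [Walk.support_cons] at h2
        rcases List.mem_cons.mp h2 with h3 | h3
        · rw [h3]; exact hxi
        · exact Walk.support_dropUntil_subset p hxj h3
    refine hmin p'.bypass.length (by
        have := Walk.length_bypass_le p'
        omega) ⟨p'.bypass, ?_, Walk.bypass_isPath _, rfl⟩
    intro x hx
    exact hLwp x (hsub x (Walk.support_bypass_subset _ hx))
  · -- interior levels
    intro i h0i hiq
    have hxi : p.getVert i ∈ p.support :=
      Walk.mem_support_iff_exists_getVert.mpr ⟨i, rfl, by omega⟩
    rcases hLwp _ hxi with h | h | h
    · exfalso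
      have : i = 0 := by
        have h0 : p.getVert i = p.getVert 0 := by rw [h, Walk.getVert_zero]
        exact hginj i (by omega) 0 (by omega) h0
      omega
    · exfalso
      have : i = q := by
        have h0 : p.getVert i = p.getVert p.length := by rw [h, Walk.getVert_length]
        have := hginj i (by omega) p.length (by omega) h0
        omega
      omega
    · exact h

/-- Two induced `s-s'` paths through level `k`, of lengths of opposite parity, both ≥ 3:
contradiction with no even holes of length ≥ 6. -/
lemma core {v s s' : V} {k : ℕ} (hk : 2 ≤ k)
    (heven : ∀ n : ℕ, 6 ≤ n → Even n → IsEmpty (cycleGraph n ↪g G))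
    (hs : G.Reachable v s) (hds : G.dist v s + 1 = k)
    (hs' : G.Reachable v s') (hds' : G.dist v s' + 1 = k)
    (hne : s ≠ s') (hnadj : ¬ G.Adj s s')
    (e₁ e₂ : ℕ → V) (l₁ l₂ : ℕ) (hl₁ : 3 ≤ l₁) (hl₂ : 3 ≤ l₂)
    (hpar : (l₁ + l₂) % 2 = 1)
    (h₁0 : e₁ 0 = s) (h₁1 : e₁ l₁ = s')
    (h₂0 : e₂ 0 = s) (h₂1 : e₂ l₂ = s')
    (e₁adj : ∀ i < l₁, G.Adj (e₁ i) (e₁ (i+1)))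
    (e₁non : ∀ i j, i ≤ l₁ → j ≤ l₁ → i + 1 < j → ¬ G.Adj (e₁ i) (e₁ j))
    (e₁inj : ∀ i j, i ≤ l₁ → j ≤ l₁ → i < j → e₁ i ≠ e₁ j)
    (e₁lev : ∀ i, 0 < i → i < l₁ → G.Reachable v (e₁ i) ∧ G.dist v (e₁ i) = k)
    (e₂adj : ∀ i < l₂, G.Adj (e₂ i) (e₂ (i+1)))
    (e₂non : ∀ i j, i ≤ l₂ → j ≤ l₂ → i + 1 < j → ¬ G.Adj (e₂ i) (e₂ j))
    (e₂inj : ∀ i j, i ≤ l₂ → j ≤ l₂ → i < j → e₂ i ≠ e₂ j)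
    (e₂lev : ∀ i, 0 < i → i < l₂ → G.Reachable v (e₂ i) ∧ G.dist v (e₂ i) = k) :
    False := by
  obtain ⟨q, g, hq2, hg0, hgq, gadj, ginj, gnon, glev⟩ :=
    Qexists (G := G) hk hs hds hs' hds' hne hnadj
  have cross : ∀ (e : ℕ → V) (l : ℕ),
      (∀ i, 0 < i → i < l → G.Reachable v (e i) ∧ G.dist v (e i) = k) →
      ∀ i j, 0 < i → i < l → 0 < j → j < q → ¬ G.Adj (e i) (g j) ∧ e i ≠ g j := by
    intro e l hlev i j hi hil hj hjq
    obtain ⟨hre, hde⟩ := hlev i hi hil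
    obtain ⟨hrg, hdg⟩ := glev j hj hjq
    constructor
    · intro hadj
      have := my_dist_adj_le hrg hadj.symm
      omega
    · intro heq
      rw [heq] at hde
      omega
  have hcyc : ∀ (e : ℕ → V) (l : ℕ), 3 ≤ l → e 0 = s → e l = s' →
      (∀ i < l, G.Adj (e i) (e (i+1))) →
      (∀ i j, i ≤ l → j ≤ l → i + 1 < j → ¬ G.Adj (e i) (e j)) →
      (∀ i j, i ≤ l → j ≤ l → i < j → e i ≠ e j) →
      (∀ i, 0 < i → i < l → G.Reachable v (e i) ∧ G.dist v (e i) = k) →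
      Nonempty (cycleGraph (l + q) ↪g G) := by
    intro e l hl he0 hel hadj hnon hinj hlev
    refine glue e g l q hl hq2 (by rw [he0, hg0]) (by rw [hel, hgq]) hadj hnon hinj
      gadj gnon (fun i j hi hj hij heq => by have := ginj i hi j hj heq; omega)
      (cross e l hlev)
  have hc₁ := hcyc e₁ l₁ hl₁ h₁0 h₁1 e₁adj e₁non e₁inj e₁lev
  have hc₂ := hcyc e₂ l₂ hl₂ h₂0 h₂1 e₂adj e₂non e₂inj e₂lev
  rcases Nat.even_or_odd (l₁ + q) with hev | hodd
  · refine (heven (l₁ + q) ?_ hev).false hc₁.some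
    have hev' := hev
    rw [Nat.even_iff] at hev'
    omega
  · have hev : Even (l₂ + q) := by
      rcases Nat.even_or_odd (l₂ + q) with h | h
      · exact h
      · exfalso
        rw [Nat.odd_iff] at hodd h
        omega
    refine (heven (l₂ + q) ?_ hev).false hc₂.some
    have hev' := hev
    rw [Nat.even_iff] at hev'
    have hodd' := hodd
    rw [Nat.odd_iff] at hodd'
    omega



def T3 (i : Fin 5) (c : Fin 3) (x : Fin 5) : Prop :=
  x = i ∨ (c = 1 ∧ x = i + 2) ∨ (c = 2 ∧ x = i + 3)

instance (i : Fin 5) (c : Fin 3) (x : Fin 5) : Decidable (T3 i c x) := by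
  unfold T3; infer_instance

abbrev has3 (T T' : Fin 5 → Prop) [DecidablePred T] [DecidablePred T'] : Prop :=
  ∃ x y : Fin 5, (cycleGraph 5).Adj x y ∧ T x ∧ T' y ∧ ¬ T' x ∧ ¬ T y

abbrev has4 (T T' : Fin 5 → Prop) [DecidablePred T] [DecidablePred T'] : Prop :=
  ∃ x m y : Fin 5, (cycleGraph 5).Adj x m ∧ (cycleGraph 5).Adj m y ∧
    ¬ (cycleGraph 5).Adj x y ∧ x ≠ y ∧
    T x ∧ T' y ∧ ¬ T' x ∧ ¬ T y ∧ ¬ T m ∧ ¬ T' m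

abbrev has5 (T T' : Fin 5 → Prop) [DecidablePred T] [DecidablePred T'] : Prop :=
  ∃ x p r y : Fin 5, (cycleGraph 5).Adj x p ∧ (cycleGraph 5).Adj p r ∧
    (cycleGraph 5).Adj r y ∧
    ¬ (cycleGraph 5).Adj x r ∧ ¬ (cycleGraph 5).Adj x y ∧ ¬ (cycleGraph 5).Adj p y ∧
    x ≠ r ∧ x ≠ y ∧ p ≠ y ∧
    T x ∧ T' y ∧ ¬ T' x ∧ ¬ T y ∧ ¬ T p ∧ ¬ T' p ∧ ¬ T r ∧ ¬ T' r

abbrev conflict (T T' : Fin 5 → Prop) [DecidablePred T] [DecidablePred T'] : Prop :=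
  has4 T T' ∧ (has3 T T' ∨ has5 T T')

instance (T T' : Fin 5 → Prop) [DecidablePred T] [DecidablePred T'] : Decidable (has3 T T') := by
  unfold has3; infer_instance
instance (T T' : Fin 5 → Prop) [DecidablePred T] [DecidablePred T'] : Decidable (has4 T T') := by
  unfold has4; infer_instance
instance (T T' : Fin 5 → Prop) [DecidablePred T] [DecidablePred T'] : Decidable (has5 T T') := by
  unfold has5; infer_instance
instance (T T' : Fin 5 → Prop) [DecidablePred T] [DecidablePred T'] : Decidable (conflict T T') := by
  unfold conflict; infer_instance

set_option maxHeartbeats 4000000 in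
set_option maxRecDepth 10000 in
lemma master : ∀ t : Fin 5 → Fin 3, ∃ i j : Fin 5,
    conflict (T3 i (t i)) (T3 j (t j)) := by decide


lemma noC5 (h3 : G.CliqueFree 3)
    (heven : ∀ n : ℕ, 6 ≤ n → Even n → IsEmpty (cycleGraph n ↪g G))
    (v : V) (k : ℕ) (hk : 1 ≤ k)
    (S : Set V) (hS : S ⊆ level G v (k - 1))
    (hstable : S.Pairwise fun a b => ¬ G.Adj a b) :
    IsEmpty (cycleGraph 5 ↪g G.induce (neighborsOf G S ∩ level G v k)) := by
  classical
  constructor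
  intro emb
  set A := neighborsOf G S ∩ level G v k with hA
  let a : Fin 5 → V := fun i => ((emb i : ↥A) : V)
  have hmem : ∀ i, a i ∈ A := fun i => (emb i).2
  have hadj5 : ∀ i j, G.Adj (a i) (a j) ↔ (cycleGraph 5).Adj i j := by
    intro i j
    have h := emb.map_rel_iff (a := i) (b := j)
    rw [← h]
    simp [a]
  have hainj : ∀ i j, a i = a j → i = j := by
    intro i j h
    exact emb.injective (Subtype.val_injective h)
  have hrA : ∀ i, G.Reachable v (a i) := fun i => ((hmem i).2).1
  have hdA : ∀ i, G.dist v (a i) = k := fun i => ((hmem i).2).2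
  have hcov : ∀ i, ∃ s, s ∈ S ∧ G.Adj s (a i) := by
    intro i
    obtain ⟨s, hs1, hs2⟩ := (hmem i).1
    exact ⟨s, hs1, hs2⟩
  choose σ hσS hσadj using hcov
  have hrS : ∀ i, G.Reachable v (σ i) := fun i => (hS (hσS i)).1
  have hdS : ∀ i, G.dist v (σ i) = k - 1 := fun i => (hS (hσS i)).2
  have hc5adj : ∀ i : Fin 5, (cycleGraph 5).Adj i (i + 1) := by decide
  -- case k = 1
  rcases Nat.lt_or_ge k 2 with hk1 | hk2
  · have hkk : k = 1 := by omega
    have hveq : ∀ i, σ i = v := by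
      intro i
      have := hdS i
      rw [hkk] at this
      simp only [Nat.sub_self] at this
      rcases dist_eq_zero_iff_eq_or_not_reachable.mp this with h | h
      · exact h.symm
      · exact absurd (hrS i) h
    refine h3 {v, a 0, a 1} (is3Clique_triple_iff.mpr ⟨?_, ?_, ?_⟩)
    · have := hσadj 0; rwa [hveq 0] at this
    · have := hσadj 1; rwa [hveq 1] at this
    · exact (hadj5 0 1).mpr (hc5adj 0)
  -- main case
  have hdS' : ∀ i, G.dist v (σ i) + 1 = k := by
    intro i; have := hdS i; omega
  have htri : ∀ (i x : Fin 5), ¬ (G.Adj (σ i) (a x) ∧ G.Adj (σ i) (a (x + 1))) := by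
    rintro i x ⟨hx1, hx2⟩
    exact h3 {σ i, a x, a (x+1)}
      (is3Clique_triple_iff.mpr ⟨hx1, hx2, (hadj5 x (x+1)).mpr (hc5adj x)⟩)
  have hfin5 : ∀ x i : Fin 5, x = i ∨ x = i + 1 ∨ x = i + 2 ∨ x = i + 3 ∨ x = i + 4 := by
    decide
  have hf1 : ∀ i : Fin 5, i + 4 + 1 = i := by decide
  have hf2 : ∀ i : Fin 5, i + 2 + 1 = i + 3 := by decide
  have hcl : ∀ i, ∃ c : Fin 3, ∀ x, G.Adj (σ i) (a x) ↔ T3 i c x := by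
    intro i
    have hdiag := hσadj i
    have hni1 : ¬ G.Adj (σ i) (a (i + 1)) := fun h => htri i i ⟨hdiag, h⟩
    have hni4 : ¬ G.Adj (σ i) (a (i + 4)) := by
      intro h
      refine htri i (i + 4) ⟨h, ?_⟩
      rw [hf1 i]
      exact hdiag
    by_cases h2 : G.Adj (σ i) (a (i + 2)) <;> by_cases h3' : G.Adj (σ i) (a (i + 3))
    · exfalso
      refine htri i (i + 2) ⟨h2, ?_⟩
      rw [hf2 i]
      exact h3'
    · refine ⟨1, fun x => ⟨fun hadj => ?_, ?_⟩⟩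
      · rcases hfin5 x i with rfl | rfl | rfl | rfl | rfl
        · exact Or.inl rfl
        · exact absurd hadj hni1
        · exact Or.inr (Or.inl ⟨rfl, rfl⟩)
        · exact absurd hadj h3'
        · exact absurd hadj hni4
      · rintro (rfl | ⟨-, rfl⟩ | ⟨hc, rfl⟩)
        · exact hdiag
        · exact h2
        · exact absurd hc (by decide)
    · refine ⟨2, fun x => ⟨fun hadj => ?_, ?_⟩⟩
      · rcases hfin5 x i with rfl | rfl | rfl | rfl | rfl
        · exact Or.inl rfl
        · exact absurd hadj hni1
        · exact absurd hadj h2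
        · exact Or.inr (Or.inr ⟨rfl, rfl⟩)
        · exact absurd hadj hni4
      · rintro (rfl | ⟨hc, rfl⟩ | ⟨-, rfl⟩)
        · exact hdiag
        · exact absurd hc (by decide)
        · exact h3'
    · refine ⟨0, fun x => ⟨fun hadj => ?_, ?_⟩⟩
      · rcases hfin5 x i with rfl | rfl | rfl | rfl | rfl
        · exact Or.inl rfl
        · exact absurd hadj hni1
        · exact absurd hadj h2
        · exact absurd hadj h3'
        · exact absurd hadj hni4
      · rintro (rfl | ⟨hc, rfl⟩ | ⟨hc, rfl⟩)
        · exact hdiag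
        · exact absurd hc (by decide)
        · exact absurd hc (by decide)
  choose t ht using hcl
  obtain ⟨i, j, ⟨h4, h35⟩⟩ := SSBG.master t
  -- translate T3 to adjacency
  have hT : ∀ x, G.Adj (σ i) (a x) ↔ T3 i (t i) x := ht i
  have hT' : ∀ x, G.Adj (σ j) (a x) ↔ T3 j (t j) x := ht j
  obtain ⟨x4, m4, y4, hc1, hc2, hc3, hxy4, hTx4, hT'y4, hnT'x4, hnTy4, hnTm4, hnT'm4⟩ := h4
  have hne : σ i ≠ σ j := by
    intro h
    exact hnT'x4 ((hT' x4).mp (h ▸ (hT x4).mpr hTx4))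
  have hnadj : ¬ G.Adj (σ i) (σ j) := hstable (hσS i) (hσS j) hne
  have hsne : ∀ z : Fin 5, σ i ≠ a z ∧ σ j ≠ a z := by
    intro z
    constructor <;> intro h <;>
      [have hd := hdS' i; have hd := hdS' j] <;> rw [h, hdA z] at hd <;> omega
  -- the length-4 path
  let e4 : ℕ → V := fun n => if n = 0 then σ i else if n = 1 then a x4
    else if n = 2 then a m4 else if n = 3 then a y4 else σ j
  have he4 : (∀ n < 4, G.Adj (e4 n) (e4 (n+1))) ∧
      (∀ n l, n ≤ 4 → l ≤ 4 → n + 1 < l → ¬ G.Adj (e4 n) (e4 l)) ∧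
      (∀ n l, n ≤ 4 → l ≤ 4 → n < l → e4 n ≠ e4 l) ∧
      (∀ n, 0 < n → n < 4 → G.Reachable v (e4 n) ∧ G.dist v (e4 n) = k) := by
    refine ⟨?_, ?_, ?_, ?_⟩
    · intro n hn
      interval_cases n
      · exact (hT x4).mpr hTx4
      · exact (hadj5 x4 m4).mpr hc1
      · exact (hadj5 m4 y4).mpr hc2
      · exact ((hT' y4).mpr hT'y4).symm
    · intro n l hn hl hnl
      interval_cases n <;> interval_cases l <;> try omega
      · exact fun h => hnTm4 ((hT m4).mp h)
      · exact fun h => hnTy4 ((hT y4).mp h)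
      · exact hnadj
      · exact fun h => (hadj5 x4 y4).mp h |> fun hc => hc3 hc
      · exact fun h => hnT'x4 ((hT' x4).mp h.symm)
      · exact fun h => hnT'm4 ((hT' m4).mp h.symm)
    · intro n l hn hl hnl
      interval_cases n <;> interval_cases l <;> try omega
      · exact (hsne x4).1
      · exact (hsne m4).1
      · exact (hsne y4).1
      · exact hne
      · exact fun h => ((hadj5 x4 m4).mpr hc1).ne h
      · exact fun h => hxy4 (hainj _ _ h)
      · exact fun h => (hsne x4).2 h.symm
      · exact fun h => ((hadj5 m4 y4).mpr hc2).ne h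
      · exact fun h => (hsne m4).2 h.symm
      · exact fun h => (hsne y4).2 h.symm
    · intro n h0 h4'
      interval_cases n
      · exact ⟨hrA x4, hdA x4⟩
      · exact ⟨hrA m4, hdA m4⟩
      · exact ⟨hrA y4, hdA y4⟩
  rcases h35 with hp3 | hp5
  · obtain ⟨x3, y3, hc31, hTx3, hT'y3, hnT'x3, hnTy3⟩ := hp3
    let e3 : ℕ → V := fun n => if n = 0 then σ i else if n = 1 then a x3
      else if n = 2 then a y3 else σ j
    refine SSBG.core hk2 heven (hrS i) (hdS' i) (hrS j) (hdS' j) hne hnadj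
      e4 e3 4 3 (by norm_num) (by norm_num) (by norm_num)
      rfl rfl rfl rfl he4.1 he4.2.1 he4.2.2.1 he4.2.2.2 ?_ ?_ ?_ ?_
    · intro n hn
      interval_cases n
      · exact (hT x3).mpr hTx3
      · exact (hadj5 x3 y3).mpr hc31
      · exact ((hT' y3).mpr hT'y3).symm
    · intro n l hn hl hnl
      interval_cases n <;> interval_cases l <;> try omega
      · exact fun h => hnTy3 ((hT y3).mp h)
      · exact hnadj
      · exact fun h => hnT'x3 ((hT' x3).mp h.symm)
    · intro n l hn hl hnl
      interval_cases n <;> interval_cases l <;> try omega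
      · exact (hsne x3).1
      · exact (hsne y3).1
      · exact hne
      · exact fun h => ((hadj5 x3 y3).mpr hc31).ne h
      · exact fun h => (hsne x3).2 h.symm
      · exact fun h => (hsne y3).2 h.symm
    · intro n h0 h3''
      interval_cases n
      · exact ⟨hrA x3, hdA x3⟩
      · exact ⟨hrA y3, hdA y3⟩
  · obtain ⟨x5, p5, r5, y5, hc51, hc52, hc53, hn51, hn52, hn53, hne51, hne52, hne53,
      hTx5, hT'y5, hnT'x5, hnTy5, hnTp5, hnT'p5, hnTr5, hnT'r5⟩ := hp5
    let e5 : ℕ → V := fun n => if n = 0 then σ i else if n = 1 then a x5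
      else if n = 2 then a p5 else if n = 3 then a r5 else if n = 4 then a y5 else σ j
    refine SSBG.core hk2 heven (hrS i) (hdS' i) (hrS j) (hdS' j) hne hnadj
      e4 e5 4 5 (by norm_num) (by norm_num) (by norm_num)
      rfl rfl rfl rfl he4.1 he4.2.1 he4.2.2.1 he4.2.2.2 ?_ ?_ ?_ ?_
    · intro n hn
      interval_cases n
      · exact (hT x5).mpr hTx5
      · exact (hadj5 x5 p5).mpr hc51
      · exact (hadj5 p5 r5).mpr hc52
      · exact (hadj5 r5 y5).mpr hc53
      · exact ((hT' y5).mpr hT'y5).symm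
    · intro n l hn hl hnl
      interval_cases n <;> interval_cases l <;> try omega
      · exact fun h => hnTp5 ((hT p5).mp h)
      · exact fun h => hnTr5 ((hT r5).mp h)
      · exact fun h => hnTy5 ((hT y5).mp h)
      · exact hnadj
      · exact fun h => hn51 ((hadj5 x5 r5).mp h)
      · exact fun h => hn52 ((hadj5 x5 y5).mp h)
      · exact fun h => hnT'x5 ((hT' x5).mp h.symm)
      · exact fun h => hn53 ((hadj5 p5 y5).mp h)
      · exact fun h => hnT'p5 ((hT' p5).mp h.symm)
      · exact fun h => hnT'r5 ((hT' r5).mp h.symm)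
    · intro n l hn hl hnl
      interval_cases n <;> interval_cases l <;> try omega
      · exact (hsne x5).1
      · exact (hsne p5).1
      · exact (hsne r5).1
      · exact (hsne y5).1
      · exact hne
      · exact fun h => ((hadj5 x5 p5).mpr hc51).ne h
      · exact fun h => hne51 (hainj _ _ h)
      · exact fun h => hne52 (hainj _ _ h)
      · exact fun h => (hsne x5).2 h.symm
      · exact fun h => ((hadj5 p5 r5).mpr hc52).ne h
      · exact fun h => hne53 (hainj _ _ h)
      · exact fun h => (hsne p5).2 h.symm
      · exact fun h => ((hadj5 r5 y5).mpr hc53).ne h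
      · exact fun h => (hsne r5).2 h.symm
      · exact fun h => (hsne y5).2 h.symm
    · intro n h0 h5'
      interval_cases n
      · exact ⟨hrA x5, hdA x5⟩
      · exact ⟨hrA p5, hdA p5⟩
      · exact ⟨hrA r5, hdA r5⟩
      · exact ⟨hrA y5, hdA y5⟩


end SSBG

/-- Suppose every graph of `C_{3,5,2k≥6}` has chromatic number `< c'`.
Let `G ∈ C_{3,2k≥6}`, `v` a vertex and `(N_0, N_1, …)` the `v`-levelling. For every
`k ≥ 1` and every stable set `S ⊆ N_{k-1}`, `χ(N(S) ∩ N_k) ≤ 2c'`. -/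
theorem stable_shadow_bounded_general (c' : ℕ) (hc' : 0 < c')
    (hC : ∀ (W : Type) [Fintype W] (H : SimpleGraph W),
      H.CliqueFree 3 → NoInducedCycle H 5 →
      (∀ n : ℕ, 6 ≤ n → Even n → NoInducedCycle H n) → chi H < c')
    (V : Type) [Fintype V] (G : SimpleGraph V)
    (h3 : G.CliqueFree 3)
    (heven : ∀ n : ℕ, 6 ≤ n → Even n → NoInducedCycle G n)
    (v : V) (k : ℕ) (hk : 1 ≤ k)
    (S : Set V) (hS : S ⊆ level G v (k - 1))
    (hstable : S.Pairwise fun a b => ¬ G.Adj a b) :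
    chiSet G (neighborsOf G S ∩ level G v k) ≤ 2 * c' := by
  classical
  set A := neighborsOf G S ∩ level G v k with hA
  haveI : Fintype ↥A := Fintype.ofFinite _
  have h5 : IsEmpty (cycleGraph 5 ↪g G.induce A) :=
    SSBG.noC5 h3 (fun n h6 he => heven n h6 he) v k hk S hS hstable
  have hEv : ∀ n : ℕ, 6 ≤ n → Even n → NoInducedCycle (G.induce A) n := by
    intro n h6 he
    constructor
    intro f
    exact (heven n h6 he).false ((SimpleGraph.Embedding.induce A).comp f)
  have hcf : (G.induce A).CliqueFree 3 := h3.comap (SimpleGraph.Embedding.induce A).isContained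
  have hlt := hC ↥A (G.induce A) hcf h5 hEv
  have heq : chiSet G A = chi (G.induce A) := rfl
  rw [heq]
  omega
end

section
/- Let G be a finite connected graph, let v be a vertex of G and (N_0, N_1, …) be the v-levelling. Then there exists an index k such that 2·χ(N_k) ≥ χ(G); that is, some level is colorful. -/
open SimpleGraph

/-- In a finite connected graph, some level of any `v`-levelling is
colorful: there is `k` with `2·χ(N_k) ≥ χ(G)`. -/
theorem colorful_level_exists (V : Type) [Fintype V] (G : SimpleGraph V)
    (hconn : G.Connected) (v : V) :
    ∃ k : ℕ, chi G ≤ 2 * chiSet G (level G v k) := by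
  classical
  set n := Fintype.card V with hn
  obtain ⟨k, hk, hmax⟩ := Finset.exists_max_image (Finset.range (n + 1))
    (fun j => chiSet G (level G v j)) ⟨0, Finset.mem_range.mpr (Nat.succ_pos n)⟩
  set m := chiSet G (level G v k) with hm
  refine ⟨k, ?_⟩
  have hlev : ∀ j : ℕ, chiSet G (level G v j) ≤ m := by
    intro j
    by_cases hj : j ∈ Finset.range (n + 1)
    · exact hmax j hj
    · have hemp : level G v j = ∅ := by
        ext x
        simp only [level, Set.mem_setOf_eq, Set.mem_empty_iff_false, iff_false]
        rintro ⟨hr, hd⟩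
        obtain ⟨p⟩ := hr
        have h1 : G.dist v x ≤ p.toPath.1.length := SimpleGraph.dist_le _
        have h2 := p.toPath.2.length_lt
        exact hj (Finset.mem_range.mpr (by omega))
      rw [hemp]
      haveI : IsEmpty ((∅ : Set V) : Type) := Set.isEmpty_coe_sort.mpr rfl
      rw [chiSet, SimpleGraph.chromaticNumber_eq_zero_of_isEmpty]
      simp
  have hcol : ∀ j : ℕ, (G.induce (level G v j)).Colorable m := by
    intro j
    have hfin : (G.induce (level G v j)).chromaticNumber ≠ ⊤ :=
      SimpleGraph.chromaticNumber_ne_top_iff_exists.mpr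
        ⟨_, (G.induce (level G v j)).colorable_of_fintype⟩
    rw [← SimpleGraph.chromaticNumber_le_iff_colorable, ← ENat.coe_toNat hfin]
    exact_mod_cast hlev j
  have c : ∀ j : ℕ, (G.induce (level G v j)).Coloring (Fin m) := fun j => (hcol j).some
  have hreach : ∀ x : V, G.Reachable v x := fun x => hconn.preconnected v x
  have hmem : ∀ x : V, x ∈ level G v (G.dist v x) := fun x => ⟨hreach x, rfl⟩
  have hm1 : 1 ≤ m := by
    by_contra h
    have hm0 : m = 0 := by omega
    haveI : IsEmpty ((level G v 0) : Type) :=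
      ⟨fun x => absurd ((c 0) x).isLt (by omega)⟩
    exact this.elim ⟨v, Reachable.refl v, SimpleGraph.dist_self⟩
  let c' : ℕ → V → Fin m := fun j x =>
    if h : x ∈ level G v j then c j ⟨x, h⟩ else ⟨0, hm1⟩
  let F : V → Fin m × Bool := fun x =>
    (c' (G.dist v x) x, decide (G.dist v x % 2 = 1))
  have hvalid : ∀ {a b : V}, G.Adj a b → F a ≠ F b := by
    intro a b hab hFeq
    have hda : G.dist a b ≤ 1 := SimpleGraph.dist_le hab.toWalk
    have h1 : G.dist v b ≤ G.dist v a + G.dist a b := hconn.dist_triangle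
    have h2 : G.dist v a ≤ G.dist v b + G.dist b a := hconn.dist_triangle
    have hdab : G.dist b a ≤ 1 := SimpleGraph.dist_le hab.symm.toWalk
    by_cases hd : G.dist v a = G.dist v b
    · have hbmem : b ∈ level G v (G.dist v a) := hd ▸ hmem b
      have hadj : (G.induce (level G v (G.dist v a))).Adj ⟨a, hmem a⟩ ⟨b, hbmem⟩ := hab
      apply (c (G.dist v a)).valid hadj
      have hc1 : c' (G.dist v a) a = c' (G.dist v b) b := congrArg Prod.fst hFeq
      rw [← hd] at hc1
      simpa only [c', dif_pos (hmem a), dif_pos hbmem] using hc1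
    · have hb : decide (G.dist v a % 2 = 1) = decide (G.dist v b % 2 = 1) :=
        congrArg Prod.snd hFeq
      have : (G.dist v a % 2 = 1) ↔ (G.dist v b % 2 = 1) := by
        constructor <;> intro h <;> [exact of_decide_eq_true (hb ▸ decide_eq_true h);
          exact of_decide_eq_true (hb.symm ▸ decide_eq_true h)]
      omega
  let C : G.Coloring (Fin m × Bool) := SimpleGraph.Coloring.mk F hvalid
  have hcolG : G.Colorable (Fintype.card (Fin m × Bool)) := C.colorable
  have hcard : Fintype.card (Fin m × Bool) = 2 * m := by simp [Fintype.card_prod]; ring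
  rw [hcard] at hcolG
  have := hcolG.chromaticNumber_le
  rw [chi]
  exact ENat.toNat_le_of_le_coe this
end
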